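/- arXiv:2312.09974 — 5 statements merged into one kernel-verified Lean document; each statement's English description precedes it below -/
import Mathlib

section
/- Let u be an irrational real number, z a point of the complex upper half-plane, and (γ_k) a sequence of matrices in SL_2(ℤ) with entries a_k, b_k, c_k, d_k such that γ_k·z → u as k → ∞ (under the Möbius action). Then |c_k| → ∞ as k → ∞. -/
open Filter Matrix

private lemma im_moebius_aux (a b c d : ℤ) (h : a * d - b * c = 1) (z : ℂ) :
    (((a : ℂ) * z + (b : ℂ)) / ((c : ℂ) * z + (d : ℂ))).im
      = z.im / Complex.normSq ((c : ℂ) * z + (d : ℂ)) := by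
  have h' : (a : ℝ) * (d : ℝ) - (b : ℝ) * (c : ℝ) = 1 := by
    have := congrArg (fun x : ℤ => (x : ℝ)) h
    push_cast at this; linarith
  have key : ((a : ℂ) * z + (b : ℂ)).im * ((c : ℂ) * z + (d : ℂ)).re
      - ((a : ℂ) * z + (b : ℂ)).re * ((c : ℂ) * z + (d : ℂ)).im = z.im := by
    simp only [Complex.add_im, Complex.add_re, Complex.mul_im, Complex.mul_re,
      Complex.intCast_im, Complex.intCast_re]
    ring_nf
    linear_combination z.im * h'
  rw [Complex.div_im, div_sub_div_same, key]

private theorem aux_tendsto (u : ℝ) (hu : Irrational u) (z : ℂ) (hz : 0 < z.im)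
    (a b c d : ℕ → ℤ) (hdet : ∀ k, a k * d k - b k * c k = 1)
    (hconv : Tendsto (fun k => ((a k : ℂ) * z + (b k : ℂ)) / ((c k : ℂ) * z + (d k : ℂ)))
      atTop (nhds (u : ℂ))) :
    Tendsto (fun k => |c k|) atTop atTop := by
  set f : ℕ → ℂ := fun k => ((a k : ℂ) * z + (b k : ℂ)) / ((c k : ℂ) * z + (d k : ℂ)) with hf
  set s : ℕ → ℝ := fun k => Complex.normSq ((c k : ℂ) * z + (d k : ℂ)) with hsdef
  -- denominators nonzero
  have hne : ∀ k, (c k : ℂ) * z + (d k : ℂ) ≠ 0 := by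
    intro k h0
    have him : (c k : ℝ) * z.im = 0 := by
      have := congrArg Complex.im h0
      simpa using this
    have hc : c k = 0 := by
      rcases mul_eq_zero.1 him with h | h
      · exact_mod_cast h
      · exact absurd h (ne_of_gt hz)
    have hd : d k = 0 := by
      have := congrArg Complex.re h0
      simp [hc] at this
      exact_mod_cast this
    have := hdet k
    rw [hc, hd] at this
    simp at this
  have hs : ∀ k, 0 < s k := fun k => Complex.normSq_pos.2 (hne k)
  have him : ∀ k, (f k).im = z.im / s k := fun k => im_moebius_aux _ _ _ _ (hdet k) z
  -- imaginary parts tend to 0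
  have htend0 : Tendsto (fun k => (f k).im) atTop (nhds 0) := by
    have := (Complex.continuous_im.tendsto ((u : ℝ) : ℂ)).comp hconv
    simpa [Function.comp_def] using this
  have hti : Tendsto (fun k => z.im / s k) atTop (nhds 0) := by
    refine htend0.congr fun k => him k
  -- normSq tends to infinity
  have hstop : Tendsto s atTop atTop := by
    have h1 : Tendsto (fun k => z.im / s k) atTop (nhdsWithin 0 (Set.Ioi 0)) :=
      tendsto_nhdsWithin_of_tendsto_nhds_of_eventually_within _ hti
        (Eventually.of_forall fun k => div_pos hz (hs k))
    have h2 : Tendsto (fun k => (z.im / s k)⁻¹) atTop atTop := h1.inv_tendsto_nhdsGT_zero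
    have h3 : Tendsto (fun k => z.im * (z.im / s k)⁻¹) atTop atTop :=
      h2.const_mul_atTop hz
    refine h3.congr fun k => ?_
    field_simp
  by_contra hC
  rw [tendsto_atTop] at hC
  push_neg at hC
  obtain ⟨M, hM⟩ := hC
  have hM' : ∃ᶠ k in atTop, |c k| < M := hM
  obtain ⟨φ, hφmono, hφ⟩ := extraction_of_frequently_atTop hM'
  -- pigeonhole: some value c₀ occurs infinitely often
  have hpigeon : ∃ c₀ : ℤ, {n : ℕ | c (φ n) = c₀}.Infinite := by
    by_contra hfin
    push_neg at hfin
    have hsub : (Set.univ : Set ℕ) ⊆ ⋃ c₀ ∈ Set.Icc (-M) M, {n : ℕ | c (φ n) = c₀} := by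
      intro n _
      simp only [Set.mem_iUnion, Set.mem_setOf_eq]
      refine ⟨c (φ n), ?_, rfl⟩
      have := abs_lt.1 (hφ n)
      exact Set.mem_Icc.2 ⟨le_of_lt this.1, le_of_lt this.2⟩
    exact Set.infinite_univ
      (Set.Finite.subset ((Set.finite_Icc (-M) M).biUnion fun c₀ _ => hfin c₀) hsub)
  obtain ⟨c₀, hc₀⟩ := hpigeon
  obtain ⟨ψ, hψmono, hψ⟩ :=
    extraction_of_frequently_atTop (Nat.frequently_atTop_iff_infinite.2 hc₀)
  set ρ : ℕ → ℕ := φ ∘ ψ with hρdef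
  have hρmono : StrictMono ρ := hφmono.comp hψmono
  have hcρ : ∀ n, c (ρ n) = c₀ := fun n => hψ n
  have hconvρ : Tendsto (fun n => f (ρ n)) atTop (nhds (u : ℂ)) :=
    hconv.comp hρmono.tendsto_atTop
  have hsρ : Tendsto (fun n => s (ρ n)) atTop atTop :=
    hstop.comp hρmono.tendsto_atTop
  by_cases hc0 : c₀ = 0
  · -- c₀ = 0 : imaginary part is constant z.im > 0, contradiction
    have himρ : ∀ n, (f (ρ n)).im = z.im := by
      intro n
      have hdu : d (ρ n) = 1 ∨ d (ρ n) = -1 := by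
        have h1 : a (ρ n) * d (ρ n) = 1 := by
          have := hdet (ρ n); rw [hcρ n, hc0] at this; linarith
        exact Int.isUnit_iff.1 (IsUnit.of_mul_eq_one _ (mul_comm (a (ρ n)) (d (ρ n)) ▸ h1))
      have hsval : s (ρ n) = 1 := by
        rw [hsdef]
        simp only [hcρ n, hc0]
        rcases hdu with h | h <;> simp [h, Complex.normSq_apply]
      rw [him (ρ n), hsval, div_one]
    have : Tendsto (fun n => (f (ρ n)).im) atTop (nhds 0) :=
      htend0.comp hρmono.tendsto_atTop
    have hz0 : z.im = 0 := by
      have h2 : Tendsto (fun n : ℕ => z.im) atTop (nhds 0) := this.congr fun n => himρ n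
      exact tendsto_nhds_unique tendsto_const_nhds h2
    exact absurd hz0 (ne_of_gt hz)
  · -- c₀ ≠ 0 : a (ρ n) / c₀ → u, contradiction with irrationality
    have hc0C : (c₀ : ℂ) ≠ 0 := Int.cast_ne_zero.2 hc0
    have hc0R : (c₀ : ℝ) ≠ 0 := Int.cast_ne_zero.2 hc0
    have hneρ : ∀ n, (c₀ : ℂ) * z + (d (ρ n) : ℂ) ≠ 0 := fun n => hcρ n ▸ hne (ρ n)
    have hq : ∀ n, f (ρ n)
        = (a (ρ n) : ℂ) / (c₀ : ℂ) - 1 / ((c₀ : ℂ) * ((c₀ : ℂ) * z + (d (ρ n) : ℂ))) := by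
      intro n
      have hdetn : (a (ρ n) : ℂ) * (d (ρ n) : ℂ) - (b (ρ n) : ℂ) * (c₀ : ℂ) = 1 := by
        have := hdet (ρ n); rw [hcρ n] at this
        exact_mod_cast this
      rw [hf]
      simp only [hcρ n]
      have hD := hneρ n
      field_simp [hc0C, hD, show z * (c₀:ℂ) + (d (ρ n):ℂ) ≠ 0 by rwa [mul_comm]]
      linear_combination (-1:ℂ) * hdetn
    -- the correction term tends to 0
    have hnormtop : Tendsto (fun n => ‖(c₀ : ℂ) * z + (d (ρ n) : ℂ)‖) atTop atTop := by
      rw [tendsto_atTop]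
      intro B
      filter_upwards [tendsto_atTop.1 hsρ ((max B 0) ^ 2)] with n hn
      have hs' : s (ρ n) = ‖(c₀ : ℂ) * z + (d (ρ n) : ℂ)‖ ^ 2 := by
        rw [hsdef]
        simp only [hcρ n]
        simp [Complex.normSq_eq_norm_sq]
      rw [hs'] at hn
      nlinarith [le_max_left B 0, le_max_right B 0,
        norm_nonneg ((c₀ : ℂ) * z + (d (ρ n) : ℂ))]
    have hcorr : Tendsto (fun n => 1 / ((c₀ : ℂ) * ((c₀ : ℂ) * z + (d (ρ n) : ℂ))))
        atTop (nhds 0) := by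
      rw [tendsto_zero_iff_norm_tendsto_zero]
      have h1 : Tendsto (fun n => ‖(c₀ : ℂ)‖ * ‖(c₀ : ℂ) * z + (d (ρ n) : ℂ)‖) atTop atTop :=
        hnormtop.const_mul_atTop (by simpa using norm_pos_iff.2 hc0C)
      have h2 := tendsto_inv_atTop_zero.comp h1
      refine h2.congr fun n => ?_
      simp [norm_mul, one_div]
    have hq2 : Tendsto (fun n => (a (ρ n) : ℂ) / (c₀ : ℂ)) atTop (nhds (u : ℂ)) := by
      have := hconvρ.add hcorr
      rw [add_zero] at this
      refine this.congr fun n => ?_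
      rw [hq n]; ring
    have hq3 : Tendsto (fun n => (a (ρ n) : ℝ) / (c₀ : ℝ)) atTop (nhds u) := by
      have := (Complex.continuous_re.tendsto ((u : ℝ) : ℂ)).comp hq2
      simp only [Complex.ofReal_re] at this
      refine this.congr fun n => ?_
      have hcast : (a (ρ n) : ℂ) / (c₀ : ℂ) = (((a (ρ n) : ℝ) / (c₀ : ℝ) : ℝ) : ℂ) := by
        push_cast; ring
      show ((a (ρ n) : ℂ) / (c₀ : ℂ)).re = _
      rw [hcast, Complex.ofReal_re]
    -- eventual constancy of a (ρ n)
    have hεpos : (0 : ℝ) < 1 / (2 * |(c₀ : ℝ)|) := by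
      have : (0 : ℝ) < |(c₀ : ℝ)| := abs_pos.2 hc0R
      positivity
    obtain ⟨N, hN⟩ := Metric.tendsto_atTop.1 hq3 (1 / (2 * |(c₀ : ℝ)|)) hεpos
    have hconsta : ∀ n ≥ N, a (ρ n) = a (ρ N) := by
      intro n hn
      have h1 := hN n hn
      have h2 := hN N le_rfl
      rw [Real.dist_eq] at h1 h2
      have habs : (0 : ℝ) < |(c₀ : ℝ)| := abs_pos.2 hc0R
      have hdiff : |((a (ρ n) : ℝ) - (a (ρ N) : ℝ))| / |(c₀ : ℝ)| < 1 / |(c₀ : ℝ)| := by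
        rw [← abs_div]
        have : ((a (ρ n) : ℝ) - (a (ρ N) : ℝ)) / (c₀ : ℝ)
            = ((a (ρ n) : ℝ) / (c₀ : ℝ) - u) - ((a (ρ N) : ℝ) / (c₀ : ℝ) - u) := by ring
        rw [this]
        calc |((a (ρ n) : ℝ) / (c₀ : ℝ) - u) - ((a (ρ N) : ℝ) / (c₀ : ℝ) - u)|
            ≤ |(a (ρ n) : ℝ) / (c₀ : ℝ) - u| + |(a (ρ N) : ℝ) / (c₀ : ℝ) - u| := abs_sub _ _
          _ < 1 / (2 * |(c₀ : ℝ)|) + 1 / (2 * |(c₀ : ℝ)|) := add_lt_add h1 h2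
          _ = 1 / |(c₀ : ℝ)| := by
              rw [← add_div, show ((1:ℝ) + 1) = 2 by norm_num, ← div_div]
              norm_num
      have hlt1 : |((a (ρ n) : ℝ) - (a (ρ N) : ℝ))| < 1 :=
        (div_lt_div_iff_of_pos_right habs).1 hdiff
      have : |a (ρ n) - a (ρ N)| < 1 := by
        have : |((a (ρ n) - a (ρ N) : ℤ) : ℝ)| < 1 := by push_cast; convert hlt1 using 2
        exact_mod_cast this
      rw [abs_lt] at this
      omega
    have hulim : u = (a (ρ N) : ℝ) / (c₀ : ℝ) := by
      have hconstq : Tendsto (fun n => (a (ρ n) : ℝ) / (c₀ : ℝ)) atTop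
          (nhds ((a (ρ N) : ℝ) / (c₀ : ℝ))) := by
        refine Tendsto.congr' ?_ tendsto_const_nhds
        filter_upwards [eventually_ge_atTop N] with n hn
        rw [hconsta n hn]
      exact tendsto_nhds_unique hq3 hconstq
    exact hu ⟨(a (ρ N) : ℚ) / (c₀ : ℚ), by rw [hulim]; push_cast; ring⟩

/-- If `γ_k ∈ SL₂(ℤ)` and `γ_k · z → u` with `u` irrational, then `|c_k| → ∞`. -/
theorem abs_c_tendsto_atTop_of_moebius_tendsto_irrational
    (u : ℝ) (hu : Irrational u) (z : ℂ) (hz : 0 < z.im)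
    (γ : ℕ → Matrix.SpecialLinearGroup (Fin 2) ℤ)
    (hconv : Tendsto (fun k =>
        (((γ k : Matrix (Fin 2) (Fin 2) ℤ) 0 0 : ℂ) * z + ((γ k : Matrix (Fin 2) (Fin 2) ℤ) 0 1 : ℂ)) /
        (((γ k : Matrix (Fin 2) (Fin 2) ℤ) 1 0 : ℂ) * z + ((γ k : Matrix (Fin 2) (Fin 2) ℤ) 1 1 : ℂ)))
      atTop (nhds (u : ℂ))) :
    Tendsto (fun k => |((γ k : Matrix (Fin 2) (Fin 2) ℤ) 1 0)|) atTop atTop := by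
  refine aux_tendsto u hu z hz
    (fun k => (γ k : Matrix (Fin 2) (Fin 2) ℤ) 0 0)
    (fun k => (γ k : Matrix (Fin 2) (Fin 2) ℤ) 0 1)
    (fun k => (γ k : Matrix (Fin 2) (Fin 2) ℤ) 1 0)
    (fun k => (γ k : Matrix (Fin 2) (Fin 2) ℤ) 1 1)
    (fun k => ?_) hconv
  have := (γ k).2
  rw [Matrix.det_fin_two] at this
  exact this
end

section
/- Write F(X, Y_0, W²Y_1, W⁴Y_2 + 2CW³Y_1) = Σ_{k=0}^{N} p_k(X, C, Y)·W^k for a nonzero F ∈ ℂ[X,Y_0,Y_1,Y_2], and let k_0 be minimal with p_{k_0} ≠ 0. Then p_{k_0} equals the sum of the terms of minimal W-degree of F(X, Y_0, W²Y_1, 2CW³Y_1); in particular k_0 equals the j-order of F (the largest power of T dividing F(X,Y_0,T²Y_1,T³Y_2)), k_0 ≥ 2·deg_{Y_1}(p_{k_0}), and p_{k_0} does not depend on Y_2. -/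
open MvPolynomial Finset

noncomputable section

namespace LCGT

abbrev P5 := Polynomial (MvPolynomial (Fin 5) ℂ)

def cc : ℂ →+* P5 := Polynomial.C.comp MvPolynomial.C

def wt (m : Fin 4 →₀ ℕ) : ℕ := 2 * m 2 + 3 * m 3

def σP : Fin 4 → P5 :=
  ![Polynomial.C (X 0), Polynomial.C (X 2), Polynomial.C (X 3) * Polynomial.X ^ 2,
    Polynomial.C (X 4) * Polynomial.X ^ 4 + Polynomial.C (2 * X 1 * X 3) * Polynomial.X ^ 3]

def σS : Fin 4 → P5 :=
  ![Polynomial.C (X 0), Polynomial.C (X 2), Polynomial.C (X 3) * Polynomial.X ^ 2,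
    Polynomial.C (2 * X 1 * X 3) * Polynomial.X ^ 3]

def σT : Fin 4 → P5 :=
  ![Polynomial.C (X 1), Polynomial.C (X 2), Polynomial.C (X 3) * Polynomial.X ^ 2,
    Polynomial.C (X 4) * Polynomial.X ^ 3]

def ev (pt : Fin 5 → ℂ) (w : ℂ) : P5 →+* ℂ :=
  (Polynomial.evalRingHom w).comp (Polynomial.mapRingHom (MvPolynomial.eval pt))

lemma ev_apply (pt : Fin 5 → ℂ) (w : ℂ) (f : P5) :
    ev pt w f = Polynomial.eval w (f.map (MvPolynomial.eval pt)) := rfl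

lemma hom_eval₂cc (h : P5 →+* ℂ) (hc : ∀ c : ℂ, h (cc c) = c)
    (σ : Fin 4 → P5) (F : MvPolynomial (Fin 4) ℂ) :
    h (eval₂ cc σ F) = eval (fun i => h (σ i)) F := by
  rw [eval₂_comp_left h cc σ F, show h.comp cc = RingHom.id ℂ from RingHom.ext hc, eval₂_id]
  rfl

lemma ev_cc (pt : Fin 5 → ℂ) (w : ℂ) (c : ℂ) : ev pt w (cc c) = c := by
  simp [ev, cc]

lemma evalP (F : MvPolynomial (Fin 4) ℂ) (pt : Fin 5 → ℂ) (w : ℂ) :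
    ev pt w (eval₂ cc σP F) =
      eval (![pt 0, pt 2, w ^ 2 * pt 3, w ^ 4 * pt 4 + 2 * pt 1 * w ^ 3 * pt 3] : Fin 4 → ℂ) F := by
  have hv : (fun i => ev pt w (σP i)) = (![pt 0, pt 2, w ^ 2 * pt 3, w ^ 4 * pt 4 + 2 * pt 1 * w ^ 3 * pt 3] : Fin 4 → ℂ) := by
    funext i
    fin_cases i <;> simp [ev, σP] <;> ring
  rw [hom_eval₂cc _ (ev_cc pt w), hv]

lemma evalS (F : MvPolynomial (Fin 4) ℂ) (pt : Fin 5 → ℂ) (w : ℂ) :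
    ev pt w (eval₂ cc σS F) =
      eval (![pt 0, pt 2, w ^ 2 * pt 3, 2 * pt 1 * w ^ 3 * pt 3] : Fin 4 → ℂ) F := by
  have hv : (fun i => ev pt w (σS i)) = (![pt 0, pt 2, w ^ 2 * pt 3, 2 * pt 1 * w ^ 3 * pt 3] : Fin 4 → ℂ) := by
    funext i
    fin_cases i <;> simp [ev, σS] <;> ring
  rw [hom_eval₂cc _ (ev_cc pt w), hv]

lemma evalT (F : MvPolynomial (Fin 4) ℂ) (pt : Fin 5 → ℂ) (w : ℂ) :
    ev pt w (eval₂ cc σT F) =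
      eval (![pt 1, pt 2, w ^ 2 * pt 3, w ^ 3 * pt 4] : Fin 4 → ℂ) F := by
  have hv : (fun i => ev pt w (σT i)) = (![pt 1, pt 2, w ^ 2 * pt 3, w ^ 3 * pt 4] : Fin 4 → ℂ) := by
    funext i
    fin_cases i <;> simp [ev, σT] <;> ring
  rw [hom_eval₂cc _ (ev_cc pt w), hv]

lemma dvd_eval₂ {σ : Fin 4 → P5} (h2 : Polynomial.X ^ 2 ∣ σ 2) (h3 : Polynomial.X ^ 3 ∣ σ 3)
    (F : MvPolynomial (Fin 4) ℂ) {d : ℕ} (hd : ∀ m ∈ F.support, d ≤ wt m) :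
    Polynomial.X ^ d ∣ eval₂ cc σ F := by
  rw [eval₂_eq']
  refine Finset.dvd_sum fun m hm => ?_
  refine Dvd.dvd.mul_left ?_ _
  refine (pow_dvd_pow _ (hd m hm)).trans ?_
  have h2' : (Polynomial.X : P5) ^ (2 * m 2) ∣ σ 2 ^ m 2 := by
    rw [pow_mul]; exact pow_dvd_pow_of_dvd h2 _
  have h3' : (Polynomial.X : P5) ^ (3 * m 3) ∣ σ 3 ^ m 3 := by
    rw [pow_mul]; exact pow_dvd_pow_of_dvd h3 _
  calc (Polynomial.X : P5) ^ wt m = Polynomial.X ^ (2 * m 2) * Polynomial.X ^ (3 * m 3) := by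
        rw [← pow_add]; rfl
    _ ∣ σ 2 ^ m 2 * σ 3 ^ m 3 := mul_dvd_mul h2' h3'
    _ ∣ ∏ i, σ i ^ m i := by
        rw [Fin.prod_univ_four, mul_assoc]; exact dvd_mul_left _ _

def μ (m : Fin 4 →₀ ℕ) : Fin 5 →₀ ℕ :=
  Finsupp.single 0 (m 0) + Finsupp.single 1 (m 3) + Finsupp.single 2 (m 1) +
    Finsupp.single 3 (m 2 + m 3)

def ν (m : Fin 4 →₀ ℕ) : Fin 5 →₀ ℕ :=
  Finsupp.single 1 (m 0) + Finsupp.single 2 (m 1) + Finsupp.single 3 (m 2) +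
    Finsupp.single 4 (m 3)

lemma μ_inj : Function.Injective μ := by
  intro m m' h
  have h0 := DFunLike.congr_fun h 0
  have h1 := DFunLike.congr_fun h 1
  have h2 := DFunLike.congr_fun h 2
  have h3 := DFunLike.congr_fun h 3
  simp [μ, Finsupp.single_apply] at h0 h1 h2 h3
  ext i
  fin_cases i <;> simp_all <;> omega

lemma ν_inj : Function.Injective ν := by
  intro m m' h
  have h1 := DFunLike.congr_fun h 1
  have h2 := DFunLike.congr_fun h 2
  have h3 := DFunLike.congr_fun h 3
  have h4 := DFunLike.congr_fun h 4
  simp [ν, Finsupp.single_apply] at h1 h2 h3 h4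
  ext i
  fin_cases i <;> simp_all

lemma μ_apply_three (m : Fin 4 →₀ ℕ) : μ m 3 = m 2 + m 3 := by
  simp [μ, Finsupp.single_apply]

lemma μ_apply_four (m : Fin 4 →₀ ℕ) : μ m 4 = 0 := by
  simp [μ, Finsupp.single_apply]

lemma monomial_μ (m : Fin 4 →₀ ℕ) (c : ℂ) :
    (monomial (μ m) c : MvPolynomial (Fin 5) ℂ) =
      MvPolynomial.C c * (X 0 ^ m 0 * X 1 ^ m 3 * X 2 ^ m 1 * X 3 ^ (m 2 + m 3)) := by
  simp [μ, X_pow_eq_monomial, monomial_mul, C_mul_monomial]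

lemma monomial_ν (m : Fin 4 →₀ ℕ) (c : ℂ) :
    (monomial (ν m) c : MvPolynomial (Fin 5) ℂ) =
      MvPolynomial.C c * (X 1 ^ m 0 * X 2 ^ m 1 * X 3 ^ m 2 * X 4 ^ m 3) := by
  simp [ν, X_pow_eq_monomial, monomial_mul, C_mul_monomial]

lemma S_eq (F : MvPolynomial (Fin 4) ℂ) :
    eval₂ cc σS F = ∑ m ∈ F.support,
      Polynomial.C (monomial (μ m) (2 ^ m 3 * F.coeff m)) * Polynomial.X ^ wt m := by
  rw [eval₂_eq']
  refine Finset.sum_congr rfl fun m hm => ?_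
  rw [monomial_μ, Fin.prod_univ_four]
  simp only [σS, Matrix.cons_val_zero, Matrix.cons_val_one, Matrix.head_cons,
    Matrix.cons_val_two, Matrix.tail_cons, Matrix.cons_val_three, cc, RingHom.comp_apply, wt]
  simp only [map_mul, map_pow, map_ofNat]
  ring

lemma T_eq (F : MvPolynomial (Fin 4) ℂ) :
    eval₂ cc σT F = ∑ m ∈ F.support,
      Polynomial.C (monomial (ν m) (F.coeff m)) * Polynomial.X ^ wt m := by
  rw [eval₂_eq']
  refine Finset.sum_congr rfl fun m hm => ?_
  rw [monomial_ν, Fin.prod_univ_four]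
  simp only [σT, Matrix.cons_val_zero, Matrix.cons_val_one, Matrix.head_cons,
    Matrix.cons_val_two, Matrix.tail_cons, Matrix.cons_val_three, cc, RingHom.comp_apply, wt]
  simp only [map_mul, map_pow, map_ofNat]
  ring

lemma coeff_of_sum (G : Finset (Fin 4 →₀ ℕ)) (c : (Fin 4 →₀ ℕ) → MvPolynomial (Fin 5) ℂ) (k : ℕ) :
    (∑ m ∈ G, Polynomial.C (c m) * Polynomial.X ^ wt m).coeff k
      = ∑ m ∈ G.filter fun m => wt m = k, c m := by
  rw [Polynomial.finset_sum_coeff, Finset.sum_filter]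
  refine Finset.sum_congr rfl fun m hm => ?_
  rw [Polynomial.coeff_C_mul, Polynomial.coeff_X_pow]
  by_cases h : wt m = k
  · simp [h]
  · simp only [if_neg h, if_neg fun hk : k = wt m => h hk.symm, mul_zero]

lemma sum_mono_ne {S : Finset (Fin 4 →₀ ℕ)} (hS : S.Nonempty)
    {κ : (Fin 4 →₀ ℕ) → Fin 5 →₀ ℕ} (hκ : Function.Injective κ)
    {c : (Fin 4 →₀ ℕ) → ℂ} (hc : ∀ m ∈ S, c m ≠ 0) :
    (∑ m ∈ S, (monomial (κ m) (c m) : MvPolynomial (Fin 5) ℂ)) ≠ 0 := by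
  obtain ⟨m0, hm0⟩ := hS
  intro h
  have h2 := congrArg (coeff (κ m0)) h
  rw [coeff_sum, Finset.sum_eq_single_of_mem m0 hm0] at h2
  · rw [coeff_monomial, if_pos rfl] at h2
    exact hc m0 hm0 (by simpa using h2)
  · intro b _ hbne
    rw [coeff_monomial, if_neg fun he => hbne (hκ he)]

lemma pow_sub_pow_dvd {R : Type*} [CommRing R] (x a b : R) (h3a : x ^ 3 ∣ a) (h3b : x ^ 3 ∣ b)
    (h4 : x ^ 4 ∣ a - b) : ∀ n : ℕ, x ^ (3 * n + 4) ∣ a ^ (n + 1) - b ^ (n + 1) := by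
  intro n
  induction n with
  | zero => simpa using h4
  | succ n ih =>
      have key : a ^ (n + 1 + 1) - b ^ (n + 1 + 1)
          = a * (a ^ (n + 1) - b ^ (n + 1)) + (a - b) * b ^ (n + 1) := by ring
      rw [key]
      refine dvd_add ?_ ?_
      · have : x ^ (3 * (n + 1) + 4) = x ^ 3 * x ^ (3 * n + 4) := by rw [← pow_add]; ring_nf
        rw [this]; exact mul_dvd_mul h3a ih
      · have : x ^ (3 * (n + 1) + 4) = x ^ 4 * x ^ (3 * (n + 1)) := by rw [← pow_add]; ring_nf
        rw [this]
        exact mul_dvd_mul h4 (by rw [pow_mul]; exact pow_dvd_pow_of_dvd h3b _)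

lemma σP_two : σP 2 = Polynomial.C (X 3) * Polynomial.X ^ 2 := rfl
lemma σP_three : σP 3 = Polynomial.C (X 4) * Polynomial.X ^ 4
    + Polynomial.C (2 * X 1 * X 3) * Polynomial.X ^ 3 := rfl
lemma σS_three : σS 3 = Polynomial.C (2 * X 1 * X 3) * Polynomial.X ^ 3 := rfl

lemma diff_dvd (F : MvPolynomial (Fin 4) ℂ) {d : ℕ} (hd : ∀ m ∈ F.support, d ≤ wt m) :
    Polynomial.X ^ (d + 1) ∣ eval₂ cc σP F - eval₂ cc σS F := by
  rw [eval₂_eq' cc σP F, eval₂_eq' cc σS F, ← Finset.sum_sub_distrib]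
  refine Finset.dvd_sum fun m hm => ?_
  rw [← mul_sub]
  refine Dvd.dvd.mul_left ?_ _
  have hfac : (∏ i, σP i ^ m i) - (∏ i, σS i ^ m i)
      = σP 0 ^ m 0 * σP 1 ^ m 1 * (σP 2 ^ m 2 * (σP 3 ^ m 3 - σS 3 ^ m 3)) := by
    rw [Fin.prod_univ_four, Fin.prod_univ_four,
      show σS 0 = σP 0 from rfl, show σS 1 = σP 1 from rfl, show σS 2 = σP 2 from rfl]
    ring
  rw [hfac]
  refine Dvd.dvd.mul_left ?_ _
  rcases Nat.eq_zero_or_pos (m 3) with h | h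
  · simp [h]
  obtain ⟨n, hn⟩ : ∃ n, m 3 = n + 1 := ⟨m 3 - 1, by omega⟩
  have hdiff : σP 3 - σS 3 = Polynomial.C (X 4) * Polynomial.X ^ 4 := by
    rw [σP_three, σS_three]; ring
  have h3P : (Polynomial.X : P5) ^ 3 ∣ σP 3 :=
    ⟨Polynomial.C (X 4) * Polynomial.X + Polynomial.C (2 * X 1 * X 3), by rw [σP_three]; ring⟩
  have h3S : (Polynomial.X : P5) ^ 3 ∣ σS 3 := ⟨Polynomial.C (2 * X 1 * X 3), by rw [σS_three]; ring⟩
  have h4 : (Polynomial.X : P5) ^ 4 ∣ σP 3 - σS 3 := ⟨Polynomial.C (X 4), by rw [hdiff]; ring⟩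
  have key := pow_sub_pow_dvd (Polynomial.X : P5) (σP 3) (σS 3) h3P h3S h4 n
  have h2 : (Polynomial.X : P5) ^ (2 * m 2) ∣ σP 2 ^ m 2 := by
    rw [pow_mul]
    exact pow_dvd_pow_of_dvd ⟨Polynomial.C (X 3), by rw [σP_two]; ring⟩ _
  rw [hn]
  calc (Polynomial.X : P5) ^ (d + 1) ∣ Polynomial.X ^ (2 * m 2 + (3 * n + 4)) := by
        refine pow_dvd_pow _ ?_
        have h5 := hd m hm
        simp only [wt] at h5
        omega
    _ = Polynomial.X ^ (2 * m 2) * Polynomial.X ^ (3 * n + 4) := by rw [pow_add]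
    _ ∣ σP 2 ^ m 2 * (σP 3 ^ (n + 1) - σS 3 ^ (n + 1)) := mul_dvd_mul h2 key

lemma eval_flatten (pt : Fin 5 → ℂ) (H : P5) :
    MvPolynomial.eval pt (Polynomial.eval (MvPolynomial.X 0) H) = ev pt (pt 0) H := by
  have e : Polynomial.eval (MvPolynomial.X (R := ℂ) 0) H
      = Polynomial.eval₂ (RingHom.id _) (MvPolynomial.X 0) H := rfl
  have h := Polynomial.hom_eval₂ (g := MvPolynomial.eval pt) (f := RingHom.id _) (p := H)
    (MvPolynomial.X 0)
  rw [e, h, ev_apply, Polynomial.eval_map]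
  simp

lemma eval_aeval (G : MvPolynomial (Fin 5) ℂ) (t x y0 y1 y2 : ℂ) :
    Polynomial.eval t (aeval ![(Polynomial.X : Polynomial ℂ), Polynomial.C x, Polynomial.C y0,
        Polynomial.C y1, Polynomial.C y2] G) = eval (![t, x, y0, y1, y2] : Fin 5 → ℂ) G := by
  rw [aeval_def, Polynomial.algebraMap_eq]
  have h := eval₂_comp_left (Polynomial.evalRingHom t) (Polynomial.C (R := ℂ))
    ![(Polynomial.X : Polynomial ℂ), Polynomial.C x, Polynomial.C y0,
      Polynomial.C y1, Polynomial.C y2] G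
  rw [show (Polynomial.evalRingHom t).comp (Polynomial.C (R := ℂ)) = RingHom.id ℂ from
    RingHom.ext fun c => by simp, eval₂_id] at h
  rw [show (Polynomial.evalRingHom t) = Polynomial.eval t from rfl] at h
  rw [h]
  have hv : ((Polynomial.eval t) ∘ ![(Polynomial.X : Polynomial ℂ), Polynomial.C x,
      Polynomial.C y0, Polynomial.C y1, Polynomial.C y2]) = (![t, x, y0, y1, y2] : Fin 5 → ℂ) := by
    funext i
    fin_cases i <;> simp
  rw [hv]

end LCGT

end

open LCGT in
/-- Writing `F(X, Y₀, W²Y₁, W⁴Y₂ + 2CW³Y₁) = Σ_{k≤N} p_k(X,C,Y)·W^k` and letting `k₀` be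
minimal with `p_{k₀} ≠ 0`: then `p_{k₀}` is the sum of the terms of minimal `W`-degree of
`F(X, Y₀, W²Y₁, 2CW³Y₁)`, `k₀` equals the `j`-order of `F` (the largest power of `T`
dividing `F(X,Y₀,T²Y₁,T³Y₂)`), `k₀ ≥ 2·deg_{Y₁}(p_{k₀})`, and `p_{k₀}` does not depend
on `Y₂`.  Variables of `F`: `X=0, Y₀=1, Y₁=2, Y₂=3`; variables of the `p_k`:
`X=0, C=1, Y₀=2, Y₁=3, Y₂=4`; variables of `G`: `T=0, X=1, Y₀=2, Y₁=3, Y₂=4`. -/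
theorem lowest_coefficient_of_generic_transform
    (F : MvPolynomial (Fin 4) ℂ) (hF : F ≠ 0)
    (N : ℕ) (p : ℕ → MvPolynomial (Fin 5) ℂ)
    (hrep : ∀ x w c y0 y1 y2 : ℂ,
      eval (![x, y0, w ^ 2 * y1, w ^ 4 * y2 + 2 * c * w ^ 3 * y1] : Fin 4 → ℂ) F =
        ∑ k ∈ range (N + 1), eval (![x, c, y0, y1, y2] : Fin 5 → ℂ) (p k) * w ^ k)
    (k0 : ℕ) (hk0 : p k0 ≠ 0) (hk0min : ∀ k < k0, p k = 0) :
    (∀ x c y0 y1 y2 : ℂ, ∃ q : Polynomial ℂ, (∀ i ≤ k0, q.coeff i = 0) ∧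
        ∀ w : ℂ,
          eval (![x, y0, w ^ 2 * y1, 2 * c * w ^ 3 * y1] : Fin 4 → ℂ) F =
            eval (![x, c, y0, y1, y2] : Fin 5 → ℂ) (p k0) * w ^ k0 + q.eval w) ∧
    (∃ G : MvPolynomial (Fin 5) ℂ, ∀ t x y0 y1 y2 : ℂ,
        eval (![x, y0, t ^ 2 * y1, t ^ 3 * y2] : Fin 4 → ℂ) F =
          t ^ k0 * eval (![t, x, y0, y1, y2] : Fin 5 → ℂ) G) ∧
    ¬ (∃ G : MvPolynomial (Fin 5) ℂ, ∀ t x y0 y1 y2 : ℂ,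
        eval (![x, y0, t ^ 2 * y1, t ^ 3 * y2] : Fin 4 → ℂ) F =
          t ^ (k0 + 1) * eval (![t, x, y0, y1, y2] : Fin 5 → ℂ) G) ∧
    2 * degreeOf 3 (p k0) ≤ k0 ∧
    (∀ x c y0 y1 y2 y2' : ℂ,
        eval (![x, c, y0, y1, y2] : Fin 5 → ℂ) (p k0) =
          eval (![x, c, y0, y1, y2'] : Fin 5 → ℂ) (p k0)) := by
  classical
  have hrep' : ∀ (pt : Fin 5 → ℂ) (w : ℂ),
      ev pt w (eval₂ cc σP F) = ∑ k ∈ range (N + 1), eval pt (p k) * w ^ k := by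
    intro pt w
    rw [evalP]
    have h := hrep (pt 0) w (pt 1) (pt 2) (pt 3) (pt 4)
    have hpt : (![pt 0, pt 1, pt 2, pt 3, pt 4] : Fin 5 → ℂ) = pt := by
      funext i; fin_cases i <;> rfl
    rw [hpt] at h
    exact h
  have hmapP : ∀ pt : Fin 5 → ℂ, (eval₂ cc σP F).map (MvPolynomial.eval pt)
      = ∑ k ∈ range (N + 1), Polynomial.C (eval pt (p k)) * Polynomial.X ^ k := by
    intro pt
    refine Polynomial.funext fun w => ?_
    rw [← ev_apply, hrep' pt w, Polynomial.eval_finset_sum]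
    simp
  have hPk : ∀ k, k ≤ N → (eval₂ cc σP F).coeff k = p k := by
    intro k hk
    apply MvPolynomial.funext
    intro pt
    have h := congrArg (fun q => Polynomial.coeff q k) (hmapP pt)
    simp only [Polynomial.coeff_map, Polynomial.finset_sum_coeff,
      Polynomial.coeff_C_mul, Polynomial.coeff_X_pow] at h
    rw [h, Finset.sum_eq_single_of_mem k (Finset.mem_range.mpr (by omega))
      (fun b _ hb => by rw [if_neg fun he => hb he.symm, mul_zero])]
    simp
  have hPk' : ∀ k, N < k → (eval₂ cc σP F).coeff k = 0 := by
    intro k hk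
    apply MvPolynomial.funext
    intro pt
    have h := congrArg (fun q => Polynomial.coeff q k) (hmapP pt)
    simp only [Polynomial.coeff_map, Polynomial.finset_sum_coeff,
      Polynomial.coeff_C_mul, Polynomial.coeff_X_pow] at h
    rw [h, Finset.sum_eq_zero, map_zero]
    intro b hb
    rw [Finset.mem_range] at hb
    rw [if_neg (by omega), mul_zero]
  have hk0N : k0 ≤ N := by
    by_contra hgt
    push_neg at hgt
    apply hF
    refine MvPolynomial.funext fun v => ?_
    rw [map_zero]
    have h := hrep (v 0) 1 0 (v 1) (v 2) (v 3)
    norm_num at h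
    have hv : v = ![v 0, v 1, v 2, v 3] := by
      funext i; fin_cases i <;> rfl
    rw [hv, h]
    refine Finset.sum_eq_zero fun k hk => ?_
    rw [Finset.mem_range] at hk
    simp [hk0min k (by omega)]
  have hFs : F.support.Nonempty := support_nonempty.mpr hF
  have hWd : (F.support.image wt).Nonempty := hFs.image wt
  set d := (F.support.image wt).min' hWd with hdDef
  have hdle : ∀ m ∈ F.support, d ≤ wt m := fun m hm =>
    Finset.min'_le _ _ (Finset.mem_image_of_mem wt hm)
  obtain ⟨m₀, hm₀, hm₀d⟩ : ∃ m ∈ F.support, wt m = d := by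
    have h := Finset.min'_mem (F.support.image wt) hWd
    rw [Finset.mem_image] at h
    exact h
  set L : MvPolynomial (Fin 5) ℂ :=
    ∑ m ∈ F.support.filter fun m => wt m = d, monomial (μ m) (2 ^ m 3 * F.coeff m) with hL
  have hLne : L ≠ 0 := by
    refine sum_mono_ne ⟨m₀, Finset.mem_filter.mpr ⟨hm₀, hm₀d⟩⟩ μ_inj fun m hm => ?_
    exact mul_ne_zero (pow_ne_zero _ two_ne_zero) (mem_support_iff.mp (Finset.mem_filter.mp hm).1)
  have hSc : ∀ k, (eval₂ cc σS F).coeff k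
      = ∑ m ∈ F.support.filter fun m => wt m = k, monomial (μ m) (2 ^ m 3 * F.coeff m) := by
    intro k; rw [S_eq, coeff_of_sum]
  have hPzero : ∀ k < d, (eval₂ cc σP F).coeff k = 0 := by
    intro k hk
    have hdvd := dvd_eval₂ (σ := σP) ⟨Polynomial.C (X 3), by rw [σP_two]; ring⟩
      ⟨Polynomial.C (X 4) * Polynomial.X + Polynomial.C (2 * X 1 * X 3), by
        rw [σP_three]; ring⟩ F hdle
    exact Polynomial.X_pow_dvd_iff.mp hdvd k hk
  have hPd : (eval₂ cc σP F).coeff d = L := by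
    have h := diff_dvd F hdle
    have h2 := Polynomial.X_pow_dvd_iff.mp h d (by omega)
    rw [Polynomial.coeff_sub, sub_eq_zero] at h2
    rw [h2, hSc d, hL]
  have hdk0 : d = k0 := by
    rcases lt_trichotomy d k0 with h | h | h
    · exact absurd ((hPk d (by omega)).symm.trans hPd) (by rw [hk0min d h]; exact fun he => hLne he.symm)
    · exact h
    · exact absurd ((hPk k0 hk0N).symm.trans (hPzero k0 h)) hk0
  have hpk0 : p k0 = L := by rw [← hPk k0 hk0N, ← hdk0, hPd]
  have hSdvd : Polynomial.X ^ d ∣ eval₂ cc σS F :=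
    dvd_eval₂ (σ := σS) ⟨Polynomial.C (X 3), by rw [show σS 2 = σP 2 from rfl, σP_two]; ring⟩
      ⟨Polynomial.C (2 * X 1 * X 3), by rw [σS_three]; ring⟩ F hdle
  refine ⟨?_, ?_, ?_, ?_, ?_⟩
  · intro x c y0 y1 y2
    refine ⟨(eval₂ cc σS F).map (MvPolynomial.eval ![x, c, y0, y1, y2])
        - Polynomial.C (eval ![x, c, y0, y1, y2] (p k0)) * Polynomial.X ^ k0, ?_, ?_⟩
    · intro i hi
      rw [Polynomial.coeff_sub, Polynomial.coeff_map]
      rcases eq_or_lt_of_le hi with heq | hlt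
      · subst heq
        rw [hpk0, hSc, Polynomial.coeff_C_mul, Polynomial.coeff_X_pow, if_pos rfl, mul_one,
          ← hdk0, ← hL, sub_self]
      · rw [Polynomial.X_pow_dvd_iff.mp hSdvd i (by omega), map_zero,
          Polynomial.coeff_C_mul, Polynomial.coeff_X_pow, if_neg (by omega), mul_zero, sub_self]
    · intro w
      have h := evalS F ![x, c, y0, y1, y2] w
      simp only [Matrix.cons_val_zero, Matrix.cons_val_one, Matrix.head_cons, Matrix.cons_val_two,
        Matrix.tail_cons, Matrix.cons_val_three, Matrix.cons_val_four] at h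
      rw [← h, ev_apply, Polynomial.eval_sub, Polynomial.eval_mul, Polynomial.eval_pow,
        Polynomial.eval_C, Polynomial.eval_X]
      ring
  · obtain ⟨H, hH⟩ := dvd_eval₂ (σ := σT)
      ⟨Polynomial.C (X 3), by rw [show σT 2 = σP 2 from rfl, σP_two]; ring⟩
      ⟨Polynomial.C (X 4), by
        rw [show σT 3 = Polynomial.C (X 4) * Polynomial.X ^ 3 from rfl]; ring⟩ F hdle
    refine ⟨Polynomial.eval (MvPolynomial.X 0) H, ?_⟩
    intro t x y0 y1 y2
    have h := evalT F ![t, x, y0, y1, y2] t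
    simp only [Matrix.cons_val_zero, Matrix.cons_val_one, Matrix.head_cons, Matrix.cons_val_two,
      Matrix.tail_cons, Matrix.cons_val_three, Matrix.cons_val_four] at h
    have hX : ev ![t, x, y0, y1, y2] t Polynomial.X = t := by simp [ev]
    rw [← hdk0, ← h, hH, map_mul, map_pow, hX, eval_flatten]
    norm_num
  · rintro ⟨G, hG⟩
    have hTc : (eval₂ cc σT F).coeff k0 = 0 := by
      refine MvPolynomial.funext fun pt => ?_
      rw [map_zero]
      have hmap : (eval₂ cc σT F).map (MvPolynomial.eval pt)
          = Polynomial.X ^ (k0 + 1) * aeval ![(Polynomial.X : Polynomial ℂ),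
              Polynomial.C (pt 1), Polynomial.C (pt 2), Polynomial.C (pt 3),
              Polynomial.C (pt 4)] G := by
        refine Polynomial.funext fun t => ?_
        rw [← ev_apply, evalT F pt t, Polynomial.eval_mul, Polynomial.eval_pow,
          Polynomial.eval_X, eval_aeval]
        exact hG t (pt 1) (pt 2) (pt 3) (pt 4)
      have h2 := congrArg (fun q => Polynomial.coeff q k0) hmap
      simp only [Polynomial.coeff_map] at h2
      rw [h2]
      exact Polynomial.X_pow_dvd_iff.mp (dvd_mul_right _ _) k0 (by omega)
    have hTd : (eval₂ cc σT F).coeff d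
        = ∑ m ∈ F.support.filter fun m => wt m = d, monomial (ν m) (F.coeff m) := by
      rw [T_eq, coeff_of_sum]
    rw [← hdk0] at hTc
    rw [hTc] at hTd
    exact (sum_mono_ne ⟨m₀, Finset.mem_filter.mpr ⟨hm₀, hm₀d⟩⟩ ν_inj
      fun m hm => mem_support_iff.mp (Finset.mem_filter.mp hm).1) hTd.symm
  · rw [hpk0]
    have hb : ∀ u ∈ L.support, u 3 ≤ k0 / 2 := by
      intro u hu
      rw [hL] at hu
      have h := MvPolynomial.support_sum hu
      obtain ⟨m, hm, hum⟩ := Finset.mem_biUnion.mp h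
      have hwtm : wt m = d := (Finset.mem_filter.mp hm).2
      have hum' : u = μ m := Finset.mem_singleton.mp (support_monomial_subset hum)
      rw [hum', μ_apply_three]
      have h2 : 2 * (m 2 + m 3) ≤ d := by
        rw [← hwtm]; simp only [wt]; omega
      omega
    have hdeg : degreeOf 3 L ≤ k0 / 2 := degreeOf_le_iff.mpr hb
    omega
  · intro x c y0 y1 y2 y2'
    rw [hpk0, hL, map_sum, map_sum]
    refine Finset.sum_congr rfl fun m hm => ?_
    rw [eval_monomial, eval_monomial]
    congr 1
    refine Finsupp.prod_congr fun i hi => ?_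
    have h4 : i ≠ 4 := by
      intro he
      rw [he] at hi
      exact absurd (μ_apply_four m) (Finsupp.mem_support_iff.mp hi)
    fin_cases i
    · rfl
    · rfl
    · rfl
    · rfl
    · exact absurd rfl h4
end

section
/- Let F ∈ ℂ[X, Y_0, Y_1, Y_2] be nonzero and not of the form Y_1^s·g(X,Y_0) for any s ∈ ℕ and g ∈ ℂ[X,Y_0]. Write Γ(F)(Z,W,C,Y) = Σ_k p_k(Z,C,Y)W^k and let k_0 = ord_j(F) be minimal with p_{k_0} ≠ 0. Then deg_j(F) > 2·deg_{Y_1}(p_{k_0}), where deg_j(F) = deg_T F(X,Y_0,T²Y_1,T⁴Y_2). -/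
open MvPolynomial Finset

noncomputable section JAux

def Jf : Fin 4 → Polynomial (MvPolynomial (Fin 5) ℂ) :=
  ![Polynomial.C (X 0), Polynomial.C (X 2),
    Polynomial.X ^ 2 * Polynomial.C (X 3),
    Polynomial.X ^ 4 * Polynomial.C (X 4) + Polynomial.C (2 * X 1 * X 3) * Polynomial.X ^ 3]

def Jg : Fin 4 → Polynomial (MvPolynomial (Fin 4) ℂ) :=
  ![Polynomial.C (X 0), Polynomial.C (X 1),
    Polynomial.X ^ 2 * Polynomial.C (X 2), Polynomial.X ^ 4 * Polynomial.C (X 3)]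

def JPhi : MvPolynomial (Fin 4) ℂ →ₐ[ℂ] Polynomial (MvPolynomial (Fin 5) ℂ) := aeval Jf

def JPsi : MvPolynomial (Fin 4) ℂ →ₐ[ℂ] Polynomial (MvPolynomial (Fin 4) ℂ) := aeval Jg

lemma JPhi_eval (F : MvPolynomial (Fin 4) ℂ) (v : Fin 5 → ℂ) (w : ℂ) :
    Polynomial.eval w ((JPhi F).map (MvPolynomial.eval v)) =
      MvPolynomial.eval ![v 0, v 2, w ^ 2 * v 3, w ^ 4 * v 4 + 2 * v 1 * w ^ 3 * v 3] F := by
  induction F using MvPolynomial.induction_on with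
  | C a => simp [JPhi]
  | add p q hp hq => simp [map_add, hp, hq]
  | mul_X p i hp =>
      rw [map_mul, Polynomial.map_mul, Polynomial.eval_mul, hp, map_mul]
      congr 1
      have : JPhi (X i) = Jf i := aeval_X _ i
      rw [this]
      fin_cases i <;> simp [Jf] <;> ring

lemma JPsi_eval (F : MvPolynomial (Fin 4) ℂ) (v : Fin 4 → ℂ) (w : ℂ) :
    Polynomial.eval w ((JPsi F).map (MvPolynomial.eval v)) =
      MvPolynomial.eval ![v 0, v 1, w ^ 2 * v 2, w ^ 4 * v 3] F := by
  induction F using MvPolynomial.induction_on with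
  | C a => simp [JPsi]
  | add p q hp hq => simp [map_add, hp, hq]
  | mul_X p i hp =>
      rw [map_mul, Polynomial.map_mul, Polynomial.eval_mul, hp, map_mul]
      congr 1
      have : JPsi (X i) = Jg i := aeval_X _ i
      rw [this]
      fin_cases i <;> simp [Jg] <;> ring

lemma JzeroOfEval {n : ℕ} (D : Polynomial (MvPolynomial (Fin n) ℂ))
    (h : ∀ (v : Fin n → ℂ) (w : ℂ), Polynomial.eval w (D.map (MvPolynomial.eval v)) = 0) :
    D = 0 := by
  apply Polynomial.ext (fun k => ?_)
  rw [Polynomial.coeff_zero]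
  apply MvPolynomial.funext (fun v => ?_)
  rw [map_zero]
  have h2 : D.map (MvPolynomial.eval v) = 0 :=
    Polynomial.funext (fun w => by rw [h v w, Polynomial.eval_zero])
  have h3 := congrArg (fun P => Polynomial.coeff P k) h2
  simpa [Polynomial.coeff_map] using h3

lemma JcoeffsDetermined {n : ℕ} (P : Polynomial (MvPolynomial (Fin n) ℂ)) (N : ℕ)
    (p : ℕ → MvPolynomial (Fin n) ℂ)
    (h : ∀ (v : Fin n → ℂ) (w : ℂ), Polynomial.eval w (P.map (MvPolynomial.eval v)) =
      ∑ k ∈ range (N + 1), MvPolynomial.eval v (p k) * w ^ k) :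
    ∀ k, P.coeff k = if k ≤ N then p k else 0 := by
  have hD : P = ∑ k ∈ range (N + 1), Polynomial.C (p k) * Polynomial.X ^ k := by
    have := JzeroOfEval (P - ∑ k ∈ range (N + 1), Polynomial.C (p k) * Polynomial.X ^ k)
      (fun v w => by
        simp only [Polynomial.map_sub, Polynomial.eval_sub, Polynomial.map_sum,
          Polynomial.map_mul, Polynomial.map_C, Polynomial.map_pow, Polynomial.map_X,
          Polynomial.eval_finset_sum, Polynomial.eval_mul, Polynomial.eval_C,
          Polynomial.eval_pow, Polynomial.eval_X, h v w, sub_self])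
    have := sub_eq_zero.mp this
    exact this
  intro k
  rw [hD, Polynomial.finset_sum_coeff]
  simp only [Polynomial.coeff_C_mul, Polynomial.coeff_X_pow, mul_ite, mul_one, mul_zero]
  rw [Finset.sum_ite_eq (range (N + 1)) k p]
  simp [Nat.lt_succ_iff]


def Jh : Polynomial (MvPolynomial (Fin 5) ℂ) :=
  Polynomial.C (2 * X 1 * X 3) + Polynomial.C (X 4) * Polynomial.X

lemma Jf3_eq : Jf 3 = Polynomial.X ^ 3 * Jh := by
  simp only [Jf, Jh, Matrix.cons_val_three, Matrix.head_cons, Matrix.tail_cons]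
  ring

lemma JPhi_monomial (d : Fin 4 →₀ ℕ) (a : ℂ) :
    JPhi (monomial d a) = Polynomial.X ^ (2 * d 2 + 3 * d 3) *
      (Polynomial.C (C a * X 0 ^ d 0 * X 2 ^ d 1 * X 3 ^ d 2) * Jh ^ d 3) := by
  rw [JPhi, aeval_monomial, Finsupp.prod_fintype _ _ (fun i => pow_zero _), Fin.prod_univ_four]
  have h0 : Jf 0 = Polynomial.C (X 0) := rfl
  have h1 : Jf 1 = Polynomial.C (X 2) := rfl
  have h2 : Jf 2 = Polynomial.X ^ 2 * Polynomial.C (X 3) := rfl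
  rw [h0, h1, h2, Jf3_eq]
  have halg : algebraMap ℂ (Polynomial (MvPolynomial (Fin 5) ℂ)) a
      = Polynomial.C (C a) := rfl
  rw [halg]
  rw [mul_pow, mul_pow, ← Polynomial.C_pow, ← Polynomial.C_pow, ← Polynomial.C_pow]
  rw [map_mul, map_mul, map_mul, ← pow_mul, ← pow_mul]
  rw [pow_add]
  ring

lemma Jh_pow_coeff_zero (nn : ℕ) : (Jh ^ nn).coeff 0 = (2 * X 1 * X 3) ^ nn := by
  induction nn with
  | zero => simp
  | succ k ih =>
      rw [pow_succ, pow_succ, Polynomial.mul_coeff_zero, ih]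
      congr 1
      simp [Jh]

lemma JPsi_monomial (d : Fin 4 →₀ ℕ) (a : ℂ) :
    JPsi (monomial d a) = Polynomial.X ^ (2 * d 2 + 4 * d 3) * Polynomial.C (monomial d a) := by
  rw [JPsi, aeval_monomial, Finsupp.prod_fintype _ _ (fun i => pow_zero _), Fin.prod_univ_four]
  have h0 : Jg 0 = Polynomial.C (X 0) := rfl
  have h1 : Jg 1 = Polynomial.C (X 1) := rfl
  have h2 : Jg 2 = Polynomial.X ^ 2 * Polynomial.C (X 2) := rfl
  have h3 : Jg 3 = Polynomial.X ^ 4 * Polynomial.C (X 3) := rfl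
  have halg : algebraMap ℂ (Polynomial (MvPolynomial (Fin 4) ℂ)) a
      = Polynomial.C (C a) := rfl
  rw [h0, h1, h2, h3, halg, monomial_eq, Finsupp.prod_fintype _ _ (fun i => pow_zero _),
    Fin.prod_univ_four]
  rw [mul_pow, mul_pow, ← Polynomial.C_pow, ← Polynomial.C_pow, ← Polynomial.C_pow,
    ← Polynomial.C_pow, ← pow_mul, ← pow_mul]
  rw [map_mul, map_mul, map_mul, map_mul]
  rw [pow_add]
  ring

lemma JfactA (F : MvPolynomial (Fin 4) ℂ) (k : ℕ) :
    2 * degreeOf 3 ((JPhi F).coeff k) ≤ k := by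
  have mulS : ∀ (P Q : Polynomial (MvPolynomial (Fin 5) ℂ)),
      (∀ j, 2 * degreeOf 3 (P.coeff j) ≤ j) → (∀ j, 2 * degreeOf 3 (Q.coeff j) ≤ j) →
      ∀ j, 2 * degreeOf 3 ((P * Q).coeff j) ≤ j := by
    intro P Q hP hQ j
    rw [Polynomial.coeff_mul]
    calc 2 * degreeOf 3 (∑ x ∈ antidiagonal j, P.coeff x.1 * Q.coeff x.2)
        ≤ 2 * (antidiagonal j).sup (fun x => degreeOf 3 (P.coeff x.1 * Q.coeff x.2)) :=
          Nat.mul_le_mul_left 2 (degreeOf_sum_le _ _ _)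
      _ = (antidiagonal j).sup (fun x => 2 * degreeOf 3 (P.coeff x.1 * Q.coeff x.2)) := by
          rw [Finset.comp_sup_eq_sup_comp (fun t => 2 * t) (fun a b => by
            omega) (by simp)]
          rfl
      _ ≤ j := by
          apply Finset.sup_le
          intro x hx
          have hxa : x.1 + x.2 = j := Finset.HasAntidiagonal.mem_antidiagonal.mp hx
          have := degreeOf_mul_le 3 (P.coeff x.1) (Q.coeff x.2)
          have h1 := hP x.1
          have h2 := hQ x.2
          omega
  induction F using MvPolynomial.induction_on generalizing k with
  | C a =>
      have : JPhi (C a) = Polynomial.C (C a) := by simp [JPhi]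
      rw [this, Polynomial.coeff_C]
      split_ifs <;> simp
  | add p q hp hq =>
      rw [map_add, Polynomial.coeff_add]
      have := degreeOf_add_le 3 ((JPhi p).coeff k) ((JPhi q).coeff k)
      have h1 := hp k
      have h2 := hq k
      have := le_trans (Nat.mul_le_mul_left 2 this) (by omega : 2 * max (degreeOf 3 ((JPhi p).coeff k)) (degreeOf 3 ((JPhi q).coeff k)) ≤ k)
      exact this
  | mul_X p i hp =>
      rw [map_mul]
      apply mulS _ _ hp _ k
      intro j
      have hXi : JPhi (X i) = Jf i := aeval_X _ i
      rw [hXi]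
      have e2 : degreeOf 3 (2 : MvPolynomial (Fin 5) ℂ) = 0 := by
        have h2 : (C (2:ℂ) : MvPolynomial (Fin 5) ℂ) = 2 := map_ofNat _ 2
        rw [← h2, degreeOf_C]
      have eX0 : degreeOf 3 (X 0 : MvPolynomial (Fin 5) ℂ) = 0 := by rw [degreeOf_X]; decide
      have eX1 : degreeOf 3 (X 1 : MvPolynomial (Fin 5) ℂ) = 0 := by rw [degreeOf_X]; decide
      have eX2 : degreeOf 3 (X 2 : MvPolynomial (Fin 5) ℂ) = 0 := by rw [degreeOf_X]; decide
      have eX3 : degreeOf 3 (X 3 : MvPolynomial (Fin 5) ℂ) = 1 := by rw [degreeOf_X]; decide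
      have eX4 : degreeOf 3 (X 4 : MvPolynomial (Fin 5) ℂ) = 0 := by rw [degreeOf_X]; decide
      have hd : degreeOf 3 (2 * X 1 * X 3 : MvPolynomial (Fin 5) ℂ) ≤ 1 := by
        have h1 : degreeOf 3 (2 * X 1 * X 3 : MvPolynomial (Fin 5) ℂ) ≤
            degreeOf 3 (2 * X 1 : MvPolynomial (Fin 5) ℂ) +
              degreeOf 3 (X 3 : MvPolynomial (Fin 5) ℂ) := degreeOf_mul_le _ _ _
        have h2 : degreeOf 3 (2 * X 1 : MvPolynomial (Fin 5) ℂ) ≤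
            degreeOf 3 (2 : MvPolynomial (Fin 5) ℂ) +
              degreeOf 3 (X 1 : MvPolynomial (Fin 5) ℂ) := degreeOf_mul_le _ _ _
        omega
      fin_cases i
      · show 2 * degreeOf 3 ((Jf 0).coeff j) ≤ j
        rw [show Jf 0 = Polynomial.C (X 0) from rfl, Polynomial.coeff_C]
        split_ifs with h
        · omega
        · simp
      · show 2 * degreeOf 3 ((Jf 1).coeff j) ≤ j
        rw [show Jf 1 = Polynomial.C (X 2) from rfl, Polynomial.coeff_C]
        split_ifs with h
        · omega
        · simp
      · show 2 * degreeOf 3 ((Jf 2).coeff j) ≤ j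
        rw [show Jf 2 = Polynomial.X ^ 2 * Polynomial.C (X 3) from rfl,
          Polynomial.coeff_X_pow_mul']
        split_ifs with h
        · rw [Polynomial.coeff_C]
          split_ifs with h2
          · omega
          · simp
        · simp
      · show 2 * degreeOf 3 ((Jf 3).coeff j) ≤ j
        rw [Jf3_eq, Polynomial.coeff_X_pow_mul']
        split_ifs with h
        · have hc : Jh.coeff (j - 3) =
              if j - 3 = 0 then 2 * X 1 * X 3 else if j - 3 = 1 then X 4 else 0 := by
            rcases hr : j - 3 with - | jj
            · simp [Jh]
            · rcases jj with - | jjj <;> simp [Jh, Polynomial.coeff_X]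
          rw [hc]
          split_ifs with h1 h2
          · omega
          · omega
          · simp
        · simp


lemma JM_eq (a : ℂ) (e0 e1 e2 e3 : ℕ) :
    (C a * X 0 ^ e0 * X 2 ^ e1 * X 3 ^ e2) * (2 * X 1 * X 3 : MvPolynomial (Fin 5) ℂ) ^ e3 =
      monomial (Finsupp.equivFunOnFinite.symm ![e0, e3, e1, e2 + e3, 0]) (a * 2 ^ e3) := by
  rw [monomial_eq, Finsupp.prod_fintype _ _ (fun i => pow_zero _), Fin.prod_univ_five]
  have hv : ∀ i : Fin 5, (Finsupp.equivFunOnFinite.symm ![e0, e3, e1, e2 + e3, 0]) i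
      = ![e0, e3, e1, e2 + e3, 0] i := fun i => rfl
  rw [hv 0, hv 1, hv 2, hv 3, hv 4]
  simp only [Matrix.cons_val_zero, Matrix.cons_val_one, Matrix.head_cons,
    Matrix.cons_val_two, Matrix.cons_val_three, Matrix.cons_val_four, Matrix.tail_cons,
    Matrix.head_fin_const]
  have hC2 : (C (a * 2 ^ e3) : MvPolynomial (Fin 5) ℂ) = C a * 2 ^ e3 := by
    rw [map_mul, map_pow, map_ofNat]
  rw [hC2, pow_zero]
  ring

lemma Jtau_inj (d d' : Fin 4 →₀ ℕ)
    (h : (Finsupp.equivFunOnFinite.symm ![d 0, d 3, d 1, d 2 + d 3, 0] : Fin 5 →₀ ℕ)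
      = Finsupp.equivFunOnFinite.symm ![d' 0, d' 3, d' 1, d' 2 + d' 3, 0]) : d = d' := by
  have h2 : (![d 0, d 3, d 1, d 2 + d 3, 0] : Fin 5 → ℕ) = ![d' 0, d' 3, d' 1, d' 2 + d' 3, 0] :=
    Finsupp.equivFunOnFinite.symm.injective h
  have h0 := congrFun h2 0
  have h1 := congrFun h2 1
  have h3 := congrFun h2 2
  have h4 := congrFun h2 3
  simp only [Matrix.cons_val_zero, Matrix.cons_val_one, Matrix.head_cons, Matrix.cons_val_two,
    Matrix.cons_val_three, Matrix.tail_cons] at h0 h1 h3 h4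
  ext i
  fin_cases i
  · exact h0
  · exact h3
  · show d 2 = d' 2
    omega
  · exact h1

end JAux

/-- If `F ∈ ℂ[X,Y₀,Y₁,Y₂]` is nonzero and not of the form `Y₁^s·g(X,Y₀)`, and
`Γ(F)(Z,W,C,Y) = Σ_k p_k(Z,C,Y)·W^k` with `k₀` minimal such that `p_{k₀} ≠ 0`,
then `deg_j(F) > 2·deg_{Y₁}(p_{k₀})`, where `deg_j(F) = deg_T F(X,Y₀,T²Y₁,T⁴Y₂)`.
Variables of `F` and `q_k`: `X=0, Y₀=1, Y₁=2, Y₂=3`; variables of `p_k`: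
`X=0, C=1, Y₀=2, Y₁=3, Y₂=4`. -/
theorem j_degree_gt_twice_Y1_degree_of_lowest_coefficient
    (F : MvPolynomial (Fin 4) ℂ) (hF : F ≠ 0)
    (hnot : ¬ ∃ (s : ℕ) (g : MvPolynomial (Fin 2) ℂ),
      F = (X 2) ^ s * rename (![0, 1] : Fin 2 → Fin 4) g)
    (N : ℕ) (p : ℕ → MvPolynomial (Fin 5) ℂ)
    (hrep : ∀ x w c y0 y1 y2 : ℂ,
      eval (![x, y0, w ^ 2 * y1, w ^ 4 * y2 + 2 * c * w ^ 3 * y1] : Fin 4 → ℂ) F =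
        ∑ k ∈ range (N + 1), eval (![x, c, y0, y1, y2] : Fin 5 → ℂ) (p k) * w ^ k)
    (k0 : ℕ) (hk0 : p k0 ≠ 0) (hk0min : ∀ k < k0, p k = 0)
    (m : ℕ) (q : ℕ → MvPolynomial (Fin 4) ℂ)
    (hq : ∀ x t y0 y1 y2 : ℂ,
      eval (![x, y0, t ^ 2 * y1, t ^ 4 * y2] : Fin 4 → ℂ) F =
        ∑ k ∈ range (m + 1), eval (![x, y0, y1, y2] : Fin 4 → ℂ) (q k) * t ^ k)
    (hqm : q m ≠ 0) :
    2 * degreeOf 3 (p k0) < m := by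
  classical
  have hphiC : ∀ k, (JPhi F).coeff k = if k ≤ N then p k else 0 := by
    apply JcoeffsDetermined
    intro v w
    rw [JPhi_eval, hrep (v 0) w (v 1) (v 2) (v 3) (v 4)]
    have hv : (![v 0, v 1, v 2, v 3, v 4] : Fin 5 → ℂ) = v := by
      funext i; fin_cases i <;> rfl
    rw [hv]
  have hpsiC : ∀ k, (JPsi F).coeff k = if k ≤ m then q k else 0 := by
    apply JcoeffsDetermined
    intro v w
    rw [JPsi_eval, hq (v 0) w (v 1) (v 2) (v 3)]
    have hv : (![v 0, v 1, v 2, v 3] : Fin 4 → ℂ) = v := by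
      funext i; fin_cases i <;> rfl
    rw [hv]
  obtain ⟨dm, hdm, hmin⟩ := Finset.exists_min_image F.support
    (fun d => 2 * d 2 + 3 * d 3) (support_nonempty.mpr hF)
  set μ := 2 * dm 2 + 3 * dm 3 with hμdef
  have hSum : JPhi F = ∑ d ∈ F.support, Polynomial.X ^ (2 * d 2 + 3 * d 3) *
      (Polynomial.C (C (coeff d F) * X 0 ^ d 0 * X 2 ^ d 1 * X 3 ^ d 2) * Jh ^ d 3) := by
    conv_lhs => rw [F.as_sum]
    rw [map_sum]
    exact Finset.sum_congr rfl (fun d _ => JPhi_monomial d _)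
  have hcoeffμ : (JPhi F).coeff μ = ∑ d ∈ F.support,
      (if 2 * d 2 + 3 * d 3 = μ then
        monomial (Finsupp.equivFunOnFinite.symm ![d 0, d 3, d 1, d 2 + d 3, 0])
          (coeff d F * 2 ^ d 3) else 0) := by
    rw [hSum, Polynomial.finset_sum_coeff]
    apply Finset.sum_congr rfl
    intro d hd
    rw [Polynomial.coeff_X_pow_mul']
    have hge : μ ≤ 2 * d 2 + 3 * d 3 := hmin d hd
    split_ifs with h1 h2 h2
    · have hz : μ - (2 * d 2 + 3 * d 3) = 0 := by omega
      rw [hz, Polynomial.coeff_C_mul, Jh_pow_coeff_zero, JM_eq]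
    · omega
    · omega
    · rfl
  have hμne : (JPhi F).coeff μ ≠ 0 := by
    rw [hcoeffμ]
    intro h0
    have h1 := congrArg
      (coeff (Finsupp.equivFunOnFinite.symm ![dm 0, dm 3, dm 1, dm 2 + dm 3, 0])) h0
    rw [MvPolynomial.coeff_sum, MvPolynomial.coeff_zero] at h1
    rw [Finset.sum_eq_single_of_mem dm hdm] at h1
    · rw [if_pos hμdef.symm, coeff_monomial, if_pos rfl] at h1
      exact absurd h1 (mul_ne_zero (mem_support_iff.mp hdm) (pow_ne_zero _ two_ne_zero))
    · intro d hd hne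
      split_ifs with hw
      · rw [coeff_monomial]
        rw [if_neg (fun hτ => hne (Jtau_inj d dm hτ))]
      · rfl
  have hμN : μ ≤ N := by
    by_contra h
    rw [hphiC μ, if_neg h] at hμne
    exact hμne rfl
  have hk0μ : k0 ≤ μ := by
    by_contra h
    push_neg at h
    rw [hphiC μ, if_pos hμN, hk0min μ h] at hμne
    exact hμne rfl
  have hpk0 : p k0 = (JPhi F).coeff k0 := by
    rw [hphiC k0, if_pos (le_trans hk0μ hμN)]
  have hSumΨ : JPsi F = ∑ d ∈ F.support, Polynomial.X ^ (2 * d 2 + 4 * d 3) *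
      Polynomial.C (monomial d (coeff d F)) := by
    conv_lhs => rw [F.as_sum]
    rw [map_sum]
    exact Finset.sum_congr rfl (fun d _ => JPsi_monomial d _)
  have hC : ∀ d ∈ F.support, 2 * d 2 + 4 * d 3 ≤ m := by
    intro d hd
    by_contra h
    push_neg at h
    have h0 : (JPsi F).coeff (2 * d 2 + 4 * d 3) = 0 := by
      rw [hpsiC, if_neg (by omega)]
    rw [hSumΨ, Polynomial.finset_sum_coeff] at h0
    have h1 := congrArg (coeff d) h0
    rw [MvPolynomial.coeff_sum, MvPolynomial.coeff_zero] at h1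
    rw [Finset.sum_eq_single_of_mem d hd] at h1
    · rw [Polynomial.coeff_X_pow_mul', if_pos le_rfl, Nat.sub_self,
        Polynomial.coeff_C_zero, coeff_monomial, if_pos rfl] at h1
      exact mem_support_iff.mp hd h1
    · intro d' hd' hne
      rw [Polynomial.coeff_X_pow_mul']
      split_ifs with hle
      · rw [Polynomial.coeff_C]
        split_ifs with hz
        · rw [coeff_monomial, if_neg hne]
        · rfl
      · rfl
  have hA : 2 * degreeOf 3 (p k0) ≤ k0 := by
    rw [hpk0]; exact JfactA F k0
  have hk0m : k0 < m := by
    by_contra h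
    push_neg at h
    have hdmC := hC dm hdm
    have hall : ∀ d ∈ F.support, d 3 = 0 ∧ d 2 = dm 2 := by
      intro d hd
      have h1 : μ ≤ 2 * d 2 + 3 * d 3 := hmin d hd
      have h2 : 2 * d 2 + 4 * d 3 ≤ m := hC d hd
      omega
    apply hnot
    refine ⟨dm 2, ∑ d ∈ F.support,
      monomial (Finsupp.equivFunOnFinite.symm ![d 0, d 1]) (coeff d F), ?_⟩
    rw [map_sum, Finset.mul_sum]
    conv_lhs => rw [F.as_sum]
    apply Finset.sum_congr rfl
    intro d hd
    obtain ⟨h3z, h2e⟩ := hall d hd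
    have he2 : (Finsupp.equivFunOnFinite.symm ![d 0, d 1] : Fin 2 →₀ ℕ)
        = Finsupp.single 0 (d 0) + Finsupp.single 1 (d 1) := by
      ext i
      fin_cases i <;>
        simp [Finsupp.equivFunOnFinite, Finsupp.single_apply]
    have h02 : (![0, 1] : Fin 2 → Fin 4) 0 = 0 := rfl
    have h12 : (![0, 1] : Fin 2 → Fin 4) 1 = 1 := rfl
    have hs : (Finsupp.single 2 (dm 2) +
        (Finsupp.single 0 (d 0) + Finsupp.single 1 (d 1)) : Fin 4 →₀ ℕ) = d := by
      ext i
      fin_cases i <;>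
        simp [Finsupp.single_apply, h3z, h2e]
    rw [rename_monomial, X_pow_eq_monomial, monomial_mul, one_mul, he2,
      Finsupp.mapDomain_add, Finsupp.mapDomain_single, Finsupp.mapDomain_single, h02, h12, hs]
  omega
end

section
/- Let F ∈ ℂ[Y_0, Y_1, Y_2] be j-homogeneous of j-degree N, i.e. F(Y_0, T²Y_1, T⁴Y_2) = T^N F(Y_0, Y_1, Y_2). Then there exist polynomials p_{k_0}, …, p_N ∈ ℂ[Y_0,Y_1,Y_2] with p_N = F and p_{k_0} ≠ 0 of the form Y_1^ℓ·h(Y_0) with 2ℓ ≤ k_0, such that F(Y_0, W²Y_1, W⁴Y_2 + 2CW³Y_1) = C^N · Σ_{k=k_0}^{N} p_k(Y_0,Y_1,Y_2)·(W/C)^k as an identity in ℂ[Y_0,Y_1,Y_2][W, C, C^{−1}]. -/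
open MvPolynomial Finset

private lemma eval_mono3 (x : Fin 3 → ℂ) (d : Fin 3 →₀ ℕ) (a : ℂ) :
    eval x (monomial d a) = a * x 0 ^ d 0 * x 1 ^ d 1 * x 2 ^ d 2 := by
  rw [eval_monomial, Finsupp.prod_pow, Fin.prod_univ_three]; ring

private lemma eval_mono3x (x : Fin 3 → ℂ) (d : Fin 3 →₀ ℕ) (a : ℂ) :
    eval x (monomial d a) = a * x 0 ^ d 0 * x 1 ^ d 1 * x 2 ^ d 2 := by
  rw [eval_monomial, Finsupp.prod_pow, Fin.prod_univ_three]; ring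

private lemma single3_applyx (a b c : ℕ) :
    ∀ i : Fin 3, (Finsupp.single 0 a + Finsupp.single 1 b + Finsupp.single 2 c : Fin 3 →₀ ℕ) i
      = ![a, b, c] i := by
  intro i; fin_cases i <;> simp [Finsupp.single_apply]

private lemma single3_eqx (d : Fin 3 →₀ ℕ) :
    (Finsupp.single 0 (d 0) + Finsupp.single 1 (d 1) + Finsupp.single 2 (d 2) : Fin 3 →₀ ℕ) = d := by
  ext i; rw [single3_applyx]; fin_cases i <;> rfl

private lemma key_weights (F : MvPolynomial (Fin 3) ℂ) (N : ℕ)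
    (hhom : ∀ y0 y1 y2 t : ℂ,
      eval (![y0, t ^ 2 * y1, t ^ 4 * y2] : Fin 3 → ℂ) F =
        t ^ N * eval (![y0, y1, y2] : Fin 3 → ℂ) F) :
    ∀ d ∈ F.support, 2 * d 1 + 4 * d 2 = N := by
  classical
  set wt : (Fin 3 →₀ ℕ) → ℕ := fun d => 2 * d 1 + 4 * d 2 with hwt
  set W := F.support.image wt with hW
  set Fc : ℕ → MvPolynomial (Fin 3) ℂ := fun m =>
    ∑ e ∈ F.support.filter (fun e => wt e = m), monomial e (coeff e F) with hFc
  -- eval of Fc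
  have hFcev : ∀ m (x : Fin 3 → ℂ), eval x (Fc m) =
      ∑ e ∈ F.support.filter (fun e => wt e = m),
        coeff e F * x 0 ^ e 0 * x 1 ^ e 1 * x 2 ^ e 2 := by
    intro m x
    rw [hFc]; rw [map_sum]
    exact Finset.sum_congr rfl fun e _ => eval_mono3 x e (coeff e F)
  have hFzero : ∀ m, m ≠ N → Fc m = 0 := by
    intro m hm
    apply MvPolynomial.funext (q := 0)
    intro x
    rw [map_zero]
    -- the scaling identity
    have hsc : ∀ tt : ℂ, ∑ m' ∈ W, tt ^ m' * eval x (Fc m') =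
        tt ^ N * eval x F := by
      intro tt
      have h1 : ∑ m' ∈ W, tt ^ m' * eval x (Fc m') =
          ∑ e ∈ F.support, coeff e F * x 0 ^ e 0 * (tt ^ 2 * x 1) ^ e 1 * (tt ^ 4 * x 2) ^ e 2 := by
        rw [← Finset.sum_fiberwise_of_maps_to (g := wt) (t := W)
          (fun e he => Finset.mem_image_of_mem wt he)]
        refine Finset.sum_congr rfl fun m' _ => ?_
        rw [hFcev, Finset.mul_sum]
        refine Finset.sum_congr rfl fun e he => ?_
        obtain ⟨_, hwte⟩ := Finset.mem_filter.mp he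
        rw [mul_pow, mul_pow, ← pow_mul, ← pow_mul, ← hwte]
        simp only [hwt]
        rw [pow_add]
        ring
      rw [h1]
      have h2 := hhom (x 0) (x 1) (x 2) tt
      rw [show (![x 0, x 1, x 2] : Fin 3 → ℂ) = x by funext i; fin_cases i <;> rfl] at h2
      rw [← h2]
      conv_rhs => rw [F.as_sum, map_sum]
      refine Finset.sum_congr rfl fun e _ => ?_
      rw [eval_mono3]
      simp [Matrix.cons_val_zero, Matrix.cons_val_one, Matrix.head_cons]
    -- polynomial funext
    have hP : (∑ m' ∈ W, Polynomial.C (eval x (Fc m')) * Polynomial.X ^ m')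
        = Polynomial.C (eval x F) * Polynomial.X ^ N := by
      apply Polynomial.funext
      intro r
      rw [Polynomial.eval_finset_sum]
      simp only [Polynomial.eval_mul, Polynomial.eval_C, Polynomial.eval_pow, Polynomial.eval_X]
      rw [show ((eval x) F * r ^ N) = r ^ N * (eval x) F from mul_comm _ _, ← hsc r]
      exact Finset.sum_congr rfl fun m' _ => by ring
    have hc := congrArg (fun q => Polynomial.coeff q m) hP
    simp only [Polynomial.finset_sum_coeff, Polynomial.coeff_C_mul, Polynomial.coeff_X_pow,
      mul_ite, mul_one, mul_zero] at hc
    rw [Finset.sum_ite_eq W m (fun m' => eval x (Fc m'))] at hc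
    by_cases hmW : m ∈ W
    · rw [if_pos hmW, if_neg hm] at hc; exact hc
    · -- m not a weight: Fc m has empty sum
      have : F.support.filter (fun e => wt e = m) = ∅ := by
        rw [Finset.filter_eq_empty_iff]
        intro e he hwe
        exact hmW (hW ▸ Finset.mem_image.mpr ⟨e, he, hwe⟩)
      rw [hFcev, this, Finset.sum_empty]
  intro d hd
  by_contra hne
  have h0 : Fc (wt d) = 0 := hFzero (wt d) hne
  have : coeff d (Fc (wt d)) = coeff d F := by
    rw [hFc]
    simp only [MvPolynomial.coeff_sum, MvPolynomial.coeff_monomial]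
    rw [Finset.sum_ite_eq' (F.support.filter (fun e => wt e = wt d)) d (fun e => coeff e F)]
    simp [Finset.mem_filter, hd]
  rw [h0] at this
  simp at this
  exact (MvPolynomial.mem_support_iff.mp hd) this.symm

/-- For a `j`-homogeneous polynomial `F ∈ ℂ[Y₀,Y₁,Y₂]` of `j`-degree `N`, there are
polynomials `p_{k₀}, …, p_N` with `p_N = F`, `p_{k₀} ≠ 0` of the form `Y₁^ℓ·h(Y₀)` with
`2ℓ ≤ k₀`, such that `F(Y₀, W²Y₁, W⁴Y₂ + 2CW³Y₁) = Σ_{k=k₀}^{N} p_k(Y)·W^k·C^{N−k}`.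
Variables of `F`: `Y₀=0, Y₁=1, Y₂=2`. -/
theorem j_homogeneous_transform_expansion
    (F : MvPolynomial (Fin 3) ℂ) (hF : F ≠ 0) (N : ℕ)
    (hhom : ∀ y0 y1 y2 t : ℂ,
      eval (![y0, t ^ 2 * y1, t ^ 4 * y2] : Fin 3 → ℂ) F =
        t ^ N * eval (![y0, y1, y2] : Fin 3 → ℂ) F) :
    ∃ (k0 ℓ : ℕ) (p : ℕ → MvPolynomial (Fin 3) ℂ) (h : Polynomial ℂ),
      p N = F ∧ p k0 ≠ 0 ∧ k0 ≤ N ∧ 2 * ℓ ≤ k0 ∧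
      (∀ y0 y1 y2 : ℂ, eval (![y0, y1, y2] : Fin 3 → ℂ) (p k0) = y1 ^ ℓ * h.eval y0) ∧
      (∀ y0 y1 y2 w c : ℂ,
        eval (![y0, w ^ 2 * y1, w ^ 4 * y2 + 2 * c * w ^ 3 * y1] : Fin 3 → ℂ) F =
          ∑ k ∈ Finset.Icc k0 N,
            eval (![y0, y1, y2] : Fin 3 → ℂ) (p k) * w ^ k * c ^ (N - k)) := by
  have key : ∀ d ∈ F.support, 2 * d 1 + 4 * d 2 = N := key_weights F N hhom
  classical
  have hSne : F.support.Nonempty := by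
    rw [Finset.nonempty_iff_ne_empty]
    intro h0; exact hF (MvPolynomial.support_eq_empty.mp h0)
  set t := F.degreeOf 2 with ht
  have htsup : t = F.support.sup (fun d => d 2) := degreeOf_eq_sup 2 F
  obtain ⟨dm, hdmS, hdm2⟩ : ∃ d ∈ F.support, d 2 = t := by
    obtain ⟨b, hb, hs⟩ := Finset.exists_mem_eq_sup (α := ℕ) F.support hSne (fun d => d 2)
    exact ⟨b, hb, by rw [htsup, hs]⟩
  have hle2 : ∀ d ∈ F.support, d 2 ≤ t := fun d hd => by
    rw [htsup]; exact Finset.le_sup (f := fun d => (d 2 : ℕ)) hd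
  have hNdm : 2 * dm 1 + 4 * t = N := by rw [← hdm2]; exact key dm hdmS
  have hd1 : ∀ d ∈ F.support, d 2 = t → d 1 = dm 1 := by
    intro d hd hdt
    have := key d hd
    rw [hdt] at this
    omega
  have hk0t : N - (N - t) = t := by omega
  set p : ℕ → MvPolynomial (Fin 3) ℂ := fun k =>
    ∑ d ∈ F.support, monomial
      (Finsupp.single 0 (d 0) + Finsupp.single 1 (d 1 + (N - k)) + Finsupp.single 2 (d 2 - (N - k)))
      (((d 2).choose (N - k) : ℂ) * 2 ^ (N - k) * coeff d F) with hp
  set h : Polynomial ℂ := ∑ d ∈ F.support.filter (fun d => d 2 = t),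
    Polynomial.C (2 ^ t * coeff d F) * Polynomial.X ^ (d 0) with hh
  have hpev : ∀ k (x : Fin 3 → ℂ), eval x (p k) =
      ∑ d ∈ F.support, ((d 2).choose (N - k) : ℂ) * 2 ^ (N - k) * coeff d F *
        (x 0 ^ d 0 * x 1 ^ (d 1 + (N - k)) * x 2 ^ (d 2 - (N - k))) := by
    intro k x
    rw [hp, map_sum]
    refine Finset.sum_congr rfl fun d _ => ?_
    rw [eval_mono3x]
    simp only [single3_applyx, Matrix.cons_val_zero, Matrix.cons_val_one, Matrix.head_cons,
      Matrix.cons_val_two, Matrix.tail_cons]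
    ring
  have hpN : p N = F := by
    rw [hp]
    conv_rhs => rw [F.as_sum]
    refine Finset.sum_congr rfl fun d _ => ?_
    rw [Nat.sub_self]
    simp only [Nat.choose_zero_right, pow_zero, Nat.cast_one, one_mul, mul_one, add_zero,
      Nat.sub_zero]
    rw [single3_eqx]
  have hpk0ev : ∀ x : Fin 3 → ℂ, eval x (p (N - t)) =
      x 1 ^ (dm 1 + t) * Polynomial.eval (x 0) h := by
    intro x
    rw [hpev, hk0t]
    rw [← Finset.sum_filter_add_sum_filter_not F.support (fun d => d 2 = t)]
    have hz : ∑ d ∈ F.support.filter (fun d => ¬ d 2 = t),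
        (((d 2).choose t : ℂ) * 2 ^ t * coeff d F *
          (x 0 ^ d 0 * x 1 ^ (d 1 + t) * x 2 ^ (d 2 - t))) = 0 := by
      refine Finset.sum_eq_zero fun d hd => ?_
      obtain ⟨hdS, hdt⟩ := Finset.mem_filter.mp hd
      have hc0 : (d 2).choose t = 0 := Nat.choose_eq_zero_of_lt (lt_of_le_of_ne (hle2 d hdS) hdt)
      rw [hc0]; simp
    rw [hz, add_zero, hh, Polynomial.eval_finset_sum, Finset.mul_sum]
    refine Finset.sum_congr rfl fun d hd => ?_
    obtain ⟨hdS, hdt⟩ := Finset.mem_filter.mp hd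
    rw [hdt, hd1 d hdS hdt]
    simp only [Nat.choose_self, Nat.cast_one, one_mul, Nat.sub_self, pow_zero, mul_one,
      Polynomial.eval_mul, Polynomial.eval_C, Polynomial.eval_pow, Polynomial.eval_X]
    ring
  have hcoeff : h.coeff (dm 0) = 2 ^ t * coeff dm F := by
    rw [hh, Polynomial.finset_sum_coeff]
    rw [Finset.sum_eq_single dm]
    · rw [Polynomial.coeff_C_mul, Polynomial.coeff_X_pow, if_pos rfl, mul_one]
    · intro d hd hne
      obtain ⟨hdS, hdt⟩ := Finset.mem_filter.mp hd
      rw [Polynomial.coeff_C_mul, Polynomial.coeff_X_pow, if_neg, mul_zero]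
      intro h0
      apply hne
      ext i
      fin_cases i
      · show d 0 = dm 0
        rw [h0]
      · show d 1 = dm 1
        rw [hd1 d hdS hdt]
      · show d 2 = dm 2
        rw [hdt, hdm2]
    · intro hdm; exact absurd (Finset.mem_filter.mpr ⟨hdmS, hdm2⟩) hdm
  have hh0 : h ≠ 0 := by
    intro h0
    apply MvPolynomial.mem_support_iff.mp hdmS
    have h1 := hcoeff
    rw [h0, Polynomial.coeff_zero] at h1
    have h2 : (2:ℂ) ^ t ≠ 0 := pow_ne_zero _ two_ne_zero
    exact (mul_eq_zero.mp h1.symm).resolve_left h2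
  obtain ⟨z, hz⟩ : ∃ z : ℂ, Polynomial.eval z h ≠ 0 := by
    by_contra hcon
    push_neg at hcon
    exact hh0 (Polynomial.funext fun r => by rw [hcon r, Polynomial.eval_zero])
  have hpk0ne : p (N - t) ≠ 0 := by
    intro h0
    have h1 := hpk0ev ![z, 1, 0]
    rw [h0, map_zero] at h1
    simp only [Matrix.cons_val_zero, Matrix.cons_val_one, Matrix.head_cons, one_pow, one_mul] at h1
    exact hz h1.symm
  refine ⟨N - t, dm 1 + t, p, h, hpN, hpk0ne, Nat.sub_le _ _, by omega, ?_, ?_⟩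
  · intro y0 y1 y2
    have h1 := hpk0ev ![y0, y1, y2]
    simpa using h1
  · intro y0 y1 y2 w c
    have expand : eval (![y0, w ^ 2 * y1, w ^ 4 * y2 + 2 * c * w ^ 3 * y1] : Fin 3 → ℂ) F =
        ∑ d ∈ F.support, coeff d F * y0 ^ d 0 * (w ^ 2 * y1) ^ d 1 *
          ((2 * c * w ^ 3 * y1) + w ^ 4 * y2) ^ d 2 := by
      conv_lhs => rw [F.as_sum, map_sum]
      refine Finset.sum_congr rfl fun d _ => ?_
      rw [eval_mono3x]
      simp only [Matrix.cons_val_zero, Matrix.cons_val_one, Matrix.head_cons,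
        Matrix.cons_val_two, Matrix.tail_cons]
      rw [add_comm (w ^ 4 * y2) (2 * c * w ^ 3 * y1)]
    rw [expand]
    have rhs1 : ∀ k, eval (![y0, y1, y2] : Fin 3 → ℂ) (p k) * w ^ k * c ^ (N - k) =
        ∑ d ∈ F.support, ((d 2).choose (N - k) : ℂ) * 2 ^ (N - k) * coeff d F *
          (y0 ^ d 0 * y1 ^ (d 1 + (N - k)) * y2 ^ (d 2 - (N - k))) * w ^ k * c ^ (N - k) := by
      intro k
      rw [hpev]
      simp only [Matrix.cons_val_zero, Matrix.cons_val_one, Matrix.head_cons,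
        Matrix.cons_val_two, Matrix.tail_cons]
      rw [Finset.sum_mul, Finset.sum_mul]
    calc ∑ d ∈ F.support, coeff d F * y0 ^ d 0 * (w ^ 2 * y1) ^ d 1 *
          ((2 * c * w ^ 3 * y1) + w ^ 4 * y2) ^ d 2
        = ∑ d ∈ F.support, ∑ j ∈ Finset.range (t + 1),
            ((d 2).choose j : ℂ) * 2 ^ j * coeff d F *
              (y0 ^ d 0 * y1 ^ (d 1 + j) * y2 ^ (d 2 - j)) * w ^ (N - j) * c ^ j := by
          refine Finset.sum_congr rfl fun d hd => ?_
          have hkey := key d hd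
          have hd2t := hle2 d hd
          rw [add_pow, Finset.mul_sum]
          refine (Finset.sum_congr rfl fun j hj => ?_).trans
            (Finset.sum_subset (Finset.range_subset_range.mpr (by omega)) ?_)
          · have hjd : j ≤ d 2 := Nat.lt_succ_iff.mp (Finset.mem_range.mp hj)
            have e1 : (w ^ 2 * y1) ^ d 1 = w ^ (2 * d 1) * y1 ^ d 1 := by
              rw [mul_pow, ← pow_mul]
            have e2 : (2 * c * w ^ 3 * y1) ^ j = 2 ^ j * c ^ j * w ^ (3 * j) * y1 ^ j := by
              rw [mul_pow, mul_pow, mul_pow, ← pow_mul]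
            have e3 : (w ^ 4 * y2) ^ (d 2 - j) = w ^ (4 * (d 2 - j)) * y2 ^ (d 2 - j) := by
              rw [mul_pow, ← pow_mul]
            rw [e1, e2, e3, pow_add y1 (d 1) j,
              show N - j = 2 * d 1 + (3 * j + 4 * (d 2 - j)) from by omega, pow_add, pow_add]
            ring
          · intro j hjt hjd
            have hc0 : (d 2).choose j = 0 := by
              refine Nat.choose_eq_zero_of_lt ?_
              simp only [Finset.mem_range] at hjd
              omega
            rw [hc0]
            simp
      _ = ∑ d ∈ F.support, ∑ k ∈ Finset.Icc (N - t) N,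
            ((d 2).choose (N - k) : ℂ) * 2 ^ (N - k) * coeff d F *
              (y0 ^ d 0 * y1 ^ (d 1 + (N - k)) * y2 ^ (d 2 - (N - k))) * w ^ k * c ^ (N - k) := by
          refine Finset.sum_congr rfl fun d hd => ?_
          refine Finset.sum_nbij' (i := fun j => N - j) (j := fun k => N - k) ?_ ?_ ?_ ?_ ?_
          · intro j hj
            simp only [Finset.mem_range] at hj
            simp only [Finset.mem_Icc]
            omega
          · intro k hk
            simp only [Finset.mem_Icc] at hk
            simp only [Finset.mem_range]
            omega
          · intro j hj
            simp only [Finset.mem_range] at hj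
            show N - (N - j) = j
            omega
          · intro k hk
            simp only [Finset.mem_Icc] at hk
            show N - (N - k) = k
            omega
          · intro j hj
            simp only [Finset.mem_range] at hj
            rw [show N - (N - j) = j from by omega]
      _ = ∑ k ∈ Finset.Icc (N - t) N, eval (![y0, y1, y2] : Fin 3 → ℂ) (p k) * w ^ k * c ^ (N - k) := by
          rw [Finset.sum_comm]
          exact Finset.sum_congr rfl fun k _ => (rhs1 k).symm
end

section
/- Let p ∈ ℂ[X, Y_0, Y_1, Y_2] be nonzero, let τ ∈ ℍ with j'(τ) ≠ 0, and let s be the largest integer such that (Y_0 − j(τ))^s divides p. Then the set of γ ∈ SL_2(ℤ) for which the holomorphic function z ↦ p(z, j(z), j'(z), j''(z)) has order of vanishing exactly s at z = γ·τ is Zariski dense in SL_2 (i.e., its complement in SL_2(ℤ) is contained in a proper Zariski-closed subset of SL_2(ℂ)). -/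
open MvPolynomial Filter

/-- `F` vanishes at `w` to order exactly `m`. -/
def HasZeroOfOrder (F : ℂ → ℂ) (w : ℂ) (m : ℕ) : Prop :=
  ∃ g : ℂ → ℂ, AnalyticAt ℂ g w ∧ g w ≠ 0 ∧ ∀ᶠ x in nhds w, F x = (x - w) ^ m * g x


private lemma aux_analyticAt_eval (q : MvPolynomial (Fin 4) ℂ) (v : ℂ → Fin 4 → ℂ) (w : ℂ)
    (hv : ∀ i, AnalyticAt ℂ (fun z => v z i) w) :
    AnalyticAt ℂ (fun z => eval (v z) q) w := by
  induction q using MvPolynomial.induction_on with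
  | C a => simpa using (analyticAt_const : AnalyticAt ℂ (fun _ : ℂ => a) w)
  | add p q hp hq => simp only [map_add]; exact hp.add hq
  | mul_X p i hp => simp only [map_mul, eval_X]; exact hp.mul (hv i)

private lemma aux_dvd_sub (aa : ℂ) (u : MvPolynomial (Fin 4) ℂ) :
    (X 1 - C aa) ∣ (u - aeval (fun i => if i = 1 then C aa else X i) u) := by
  induction u using MvPolynomial.induction_on with
  | C b => simp
  | add p q hp hq =>
    have h := dvd_add hp hq
    have : p - aeval (fun i => if i = 1 then C aa else X i) p +
        (q - aeval (fun i => if i = 1 then C aa else X i) q) =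
        p + q - aeval (fun i => if i = 1 then C aa else X i) (p + q) := by
      rw [map_add]; ring
    rwa [this] at h
  | mul_X p i hp =>
    set f : Fin 4 → MvPolynomial (Fin 4) ℂ := fun i => if i = 1 then C aa else X i with hf
    by_cases hi : i = 1
    · subst hi
      have e1 : aeval f (p * X 1) = aeval f p * C aa := by
        rw [map_mul, aeval_X, hf]; simp
      rw [e1]
      have e2 : p * X 1 - aeval f p * C aa =
          (p - aeval f p) * X 1 + aeval f p * (X 1 - C aa) := by ring
      rw [e2]
      exact dvd_add (Dvd.dvd.mul_right hp _) (Dvd.dvd.mul_left dvd_rfl _)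
    · have e1 : aeval f (p * X i) = aeval f p * X i := by
        rw [map_mul, aeval_X, hf]; simp [hi]
      rw [e1]
      have e2 : p * X i - aeval f p * X i = (p - aeval f p) * X i := by ring
      rw [e2]
      exact Dvd.dvd.mul_right hp _

private lemma aux_eval_aeval (aa : ℂ) (u : MvPolynomial (Fin 4) ℂ) (x : Fin 4 → ℂ) :
    eval x (aeval (fun i => if i = 1 then C aa else X i) u) =
      eval (fun i => if i = 1 then aa else x i) u := by
  rw [aeval_def, algebraMap_eq, eval_eval₂]
  have h1 : (eval x).comp (C : ℂ →+* MvPolynomial (Fin 4) ℂ) = RingHom.id ℂ := by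
    ext a; simp
  rw [h1, eval₂_id]
  have h2 : (fun s => eval x (if s = 1 then C aa else X s)) =
      fun i => if i = 1 then aa else x i := by
    funext i; by_cases hi : i = 1 <;> simp [hi]
  rw [h2]

private lemma aux_t_ne (c d : ℤ) (h : ¬(c = 0 ∧ d = 0)) (z : ℂ) (hz : 0 < z.im) :
    (c : ℂ) * z + (d : ℂ) ≠ 0 := by
  intro h0
  have him : ((c : ℂ) * z + (d : ℂ)).im = (c : ℝ) * z.im := by
    simp [Complex.add_im, Complex.mul_im]
  have hre : ((c : ℂ) * z + (d : ℂ)).re = (c : ℝ) * z.re + (d : ℝ) := by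
    simp [Complex.add_re, Complex.mul_re]
  rw [h0] at him hre
  have h1 : (c : ℝ) * z.im = 0 := by simpa using him.symm
  have hc : (c : ℝ) = 0 := by
    rcases mul_eq_zero.1 h1 with h | h
    · exact h
    · exact absurd h (ne_of_gt hz)
  have hc0 : c = 0 := by exact_mod_cast hc
  rw [hc, zero_mul, zero_add] at hre
  have hd0 : d = 0 := by exact_mod_cast hre.symm
  exact h ⟨hc0, hd0⟩

private lemma aux_im (a b c d : ℝ) (h : a * d - b * c = 1) (z : ℂ) (hz : 0 < z.im)
    (ht : (c : ℂ) * z + (d : ℂ) ≠ 0) :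
    0 < (((a : ℂ) * z + (b : ℂ)) / ((c : ℂ) * z + (d : ℂ))).im := by
  have hns : 0 < Complex.normSq ((c : ℂ) * z + (d : ℂ)) := Complex.normSq_pos.2 ht
  have him : (((a : ℂ) * z + (b : ℂ)) / ((c : ℂ) * z + (d : ℂ))).im =
      z.im / Complex.normSq ((c : ℂ) * z + (d : ℂ)) := by
    rw [Complex.div_im]
    simp only [Complex.add_im, Complex.add_re, Complex.mul_im, Complex.mul_re,
      Complex.ofReal_im, Complex.ofReal_re]
    field_simp
    ring_nf
    nlinarith [h]
  rw [him]
  positivity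

private lemma aux_deriv (j : ℂ → ℂ) (hol : ∀ z : ℂ, 0 < z.im → DifferentiableAt ℂ j z)
    (A B C D : ℂ) (hdet : A * D - B * C = 1)
    (hT : ∀ z : ℂ, 0 < z.im → C * z + D ≠ 0)
    (hmS : ∀ z : ℂ, 0 < z.im → 0 < ((A * z + B) / (C * z + D)).im)
    (hE : ∀ z : ℂ, 0 < z.im → j ((A * z + B) / (C * z + D)) = j z)
    (τ : ℂ) (hτ : 0 < τ.im) :
    deriv j ((A * τ + B) / (C * τ + D)) = deriv j τ * (C * τ + D) ^ 2 ∧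
      deriv (deriv j) ((A * τ + B) / (C * τ + D)) =
        deriv (deriv j) τ * (C * τ + D) ^ 4 + 2 * C * deriv j τ * (C * τ + D) ^ 3 := by
  set S : Set ℂ := {z | 0 < z.im} with hSdef
  have hS : IsOpen S := by
    have h0 : S = Complex.im ⁻¹' Set.Ioi 0 := rfl
    rw [h0]; exact Complex.continuous_im.isOpen_preimage _ isOpen_Ioi
  have hjan : AnalyticOnNhd ℂ j S := by
    have hd : DifferentiableOn ℂ j S := fun z hz => (hol z hz).differentiableWithinAt
    exact hd.analyticOnNhd hS
  have hj'an : AnalyticOnNhd ℂ (deriv j) S := hjan.deriv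
  set m : ℂ → ℂ := fun z => (A * z + B) / (C * z + D) with hm
  have hmd : ∀ z ∈ S, HasDerivAt m (1 / (C * z + D) ^ 2) z := by
    intro z hz
    have h1 : HasDerivAt (fun z : ℂ => A * z + B) A z := by
      simpa using ((hasDerivAt_id z).const_mul A).add_const B
    have h2 : HasDerivAt (fun z : ℂ => C * z + D) C z := by
      simpa using ((hasDerivAt_id z).const_mul C).add_const D
    have h3 := h1.div h2 (hT z hz)
    have h4 : (A * (C * z + D) - (A * z + B) * C) / (C * z + D) ^ 2 = 1 / (C * z + D) ^ 2 := by
      rw [show A * (C * z + D) - (A * z + B) * C = 1 by linear_combination hdet]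
    rw [h4] at h3
    exact h3
  have hK1 : ∀ z ∈ S, deriv j (m z) * (1 / (C * z + D) ^ 2) = deriv j z := by
    intro z hz
    have hev : (fun x => j (m x)) =ᶠ[nhds z] j :=
      Filter.eventuallyEq_of_mem (hS.mem_nhds hz) (fun x hx => hE x hx)
    have hcomp : HasDerivAt (fun x => j (m x)) (deriv j (m z) * (1 / (C * z + D) ^ 2)) z :=
      ((hol (m z) (hmS z hz)).hasDerivAt).comp z (hmd z hz)
    rw [← hcomp.deriv]
    exact hev.deriv_eq
  have hτS : τ ∈ S := hτ
  have hw : m τ ∈ S := hmS τ hτ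
  have hT4 : (C * τ + D) ≠ 0 := hT τ hτ
  have heq1 : deriv j (m τ) = deriv j τ * (C * τ + D) ^ 2 := by
    have h := hK1 τ hτS
    field_simp at h
    rw [h]; ring
  have hd2 : HasDerivAt (fun z => deriv j (m z))
      (deriv (deriv j) (m τ) * (1 / (C * τ + D) ^ 2)) τ :=
    ((hj'an (m τ) hw).differentiableAt.hasDerivAt).comp τ (hmd τ hτS)
  have h2' : HasDerivAt (fun z : ℂ => C * z + D) C τ := by
    simpa using ((hasDerivAt_id τ).const_mul C).add_const D
  have h5 : HasDerivAt (fun z : ℂ => (C * z + D) ^ 2) (2 * (C * τ + D) * C) τ := by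
    simpa using h2'.fun_pow 2
  have hd3 : HasDerivAt (fun z => ((C * z + D) ^ 2)⁻¹)
      (-(2 * (C * τ + D) * C) / ((C * τ + D) ^ 2) ^ 2) τ :=
    h5.inv (pow_ne_zero 2 hT4)
  have hprod : HasDerivAt (fun z => deriv j (m z) * ((C * z + D) ^ 2)⁻¹)
      (deriv (deriv j) (m τ) * (1 / (C * τ + D) ^ 2) * ((C * τ + D) ^ 2)⁻¹ +
        deriv j (m τ) * (-(2 * (C * τ + D) * C) / ((C * τ + D) ^ 2) ^ 2)) τ := hd2.mul hd3
  have hev2 : (fun z => deriv j (m z) * ((C * z + D) ^ 2)⁻¹) =ᶠ[nhds τ] deriv j := by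
    apply Filter.eventuallyEq_of_mem (hS.mem_nhds hτS)
    intro x hx
    have h := hK1 x hx
    simpa [one_div] using h
  have hK2 : deriv (deriv j) (m τ) * (1 / (C * τ + D) ^ 2) * ((C * τ + D) ^ 2)⁻¹ +
      deriv j (m τ) * (-(2 * (C * τ + D) * C) / ((C * τ + D) ^ 2) ^ 2) = deriv (deriv j) τ := by
    rw [← hprod.deriv]
    exact hev2.deriv_eq
  refine ⟨heq1, ?_⟩
  have hmτ : m τ = (A * τ + B) / (C * τ + D) := rfl
  rw [hmτ] at hK2 heq1
  rw [heq1] at hK2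
  field_simp at hK2
  have hK3 : deriv (deriv j) ((A * τ + B) / (C * τ + D)) * (C * τ + D) ^ 4 =
      (deriv (deriv j) τ * (C * τ + D) ^ 4 + 2 * C * deriv j τ * (C * τ + D) ^ 3) *
        (C * τ + D) ^ 4 := by
    have hT4' : τ * C + D ≠ 0 := by rw [mul_comm]; exact hT4
    rw [div_eq_iff (pow_ne_zero 4 hT4'), show τ * C + D = C * τ + D by ring] at hK2
    linear_combination (C * τ + D) ^ 4 * hK2
  exact mul_right_cancel₀ (pow_ne_zero 4 hT4) hK3

private noncomputable def auxQ (τ jt j1 j2 : ℂ) (N : ℕ) (r : MvPolynomial (Fin 4) ℂ) :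
    MvPolynomial (Fin 2 × Fin 2) ℂ :=
  ∑ m ∈ r.support,
    C (coeff m r) * (C τ * X (0, 0) + X (0, 1)) ^ m 0 * (C τ * X (1, 0) + X (1, 1)) ^ (N - m 0) *
      C jt ^ m 1 * (C j1 * (C τ * X (1, 0) + X (1, 1)) ^ 2) ^ m 2 *
      (C j2 * (C τ * X (1, 0) + X (1, 1)) ^ 4 +
        C (2 * j1) * X (1, 0) * (C τ * X (1, 0) + X (1, 1)) ^ 3) ^ m 3

private lemma aux_evalQ (τ jt j1 j2 : ℂ) (N : ℕ) (r : MvPolynomial (Fin 4) ℂ)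
    (hN : ∀ m ∈ r.support, m 0 ≤ N) (e : Fin 2 × Fin 2 → ℂ)
    (ht : τ * e (1, 0) + e (1, 1) ≠ 0) :
    eval e (auxQ τ jt j1 j2 N r) = (τ * e (1, 0) + e (1, 1)) ^ N *
      eval ![(τ * e (0, 0) + e (0, 1)) / (τ * e (1, 0) + e (1, 1)), jt,
        j1 * (τ * e (1, 0) + e (1, 1)) ^ 2,
        j2 * (τ * e (1, 0) + e (1, 1)) ^ 4 +
          2 * j1 * e (1, 0) * (τ * e (1, 0) + e (1, 1)) ^ 3] r := by
  unfold auxQ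
  rw [map_sum, eval_eq', Finset.mul_sum]
  apply Finset.sum_congr rfl
  intro m hm
  simp only [map_mul, map_pow, map_add, eval_C, eval_X]
  rw [Fin.prod_univ_four]
  simp only [Matrix.cons_val_zero, Matrix.cons_val_one, Matrix.head_cons,
    Matrix.cons_val_two, Matrix.tail_cons, Matrix.cons_val_three]
  rw [div_pow]
  rw [show (τ * e (1, 0) + e (1, 1)) ^ N =
      (τ * e (1, 0) + e (1, 1)) ^ (N - m 0) * (τ * e (1, 0) + e (1, 1)) ^ m 0 from by
    rw [← pow_add, Nat.sub_add_cancel (hN m hm)]]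
  have key : (τ * e (1, 0) + e (1, 1)) ^ m 0 *
      ((τ * e (0, 0) + e (0, 1)) ^ m 0 / (τ * e (1, 0) + e (1, 1)) ^ m 0) =
      (τ * e (0, 0) + e (0, 1)) ^ m 0 := by
    rw [mul_div_assoc', mul_comm, mul_div_assoc, div_self (pow_ne_zero _ ht), mul_one]
  linear_combination (-(coeff m r) * jt ^ m 1 * (τ * e (1, 0) + e (1, 1)) ^ (N - m 0) *
    (j1 * (τ * e (1, 0) + e (1, 1)) ^ 2) ^ m 2 *
    (j2 * (τ * e (1, 0) + e (1, 1)) ^ 4 +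
      2 * j1 * e (1, 0) * (τ * e (1, 0) + e (1, 1)) ^ 3) ^ m 3) * key
/-- For nonzero `p ∈ ℂ[X,Y₀,Y₁,Y₂]` and an unramified point `τ` of `j` (`j'(τ) ≠ 0`), with
`s` maximal such that `(Y₀ − j(τ))^s ∣ p`: for all `γ ∈ SL₂(ℤ)` outside a proper
Zariski-closed subset of `SL₂(ℂ)`, the function `z ↦ p(z, j(z), j'(z), j''(z))` vanishes
to order exactly `s` at `z = γ·τ`.  Variables of `p`: `X=0, Y₀=1, Y₁=2, Y₂=3`. -/
theorem generic_order_at_unramified_point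
    (j : ℂ → ℂ)
    (hol : ∀ z : ℂ, 0 < z.im → DifferentiableAt ℂ j z)
    (hinv : ∀ a b c d : ℤ, a * d - b * c = 1 → ∀ z : ℂ, 0 < z.im →
      j (((a : ℂ) * z + (b : ℂ)) / ((c : ℂ) * z + (d : ℂ))) = j z)
    (a : ℕ → ℤ)
    (hq : ∀ z : ℂ, 0 < z.im →
      HasSum (fun k : ℕ => (a k : ℂ) * Complex.exp (2 * Real.pi * Complex.I * z) ^ (k + 1))
        (j z - (Complex.exp (2 * Real.pi * Complex.I * z))⁻¹ - 744))
    (p : MvPolynomial (Fin 4) ℂ) (hp : p ≠ 0)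
    (τ : ℂ) (hτ : 0 < τ.im) (hj' : deriv j τ ≠ 0)
    (s : ℕ)
    (hdvd : (X 1 - MvPolynomial.C (j τ)) ^ s ∣ p)
    (hnotdvd : ¬ (X 1 - MvPolynomial.C (j τ)) ^ (s + 1) ∣ p) :
    ∃ q : MvPolynomial (Fin 2 × Fin 2) ℂ,
      (∃ g : Matrix.SpecialLinearGroup (Fin 2) ℂ,
        eval (fun i => (g : Matrix (Fin 2) (Fin 2) ℂ) i.1 i.2) q ≠ 0) ∧
      ∀ γ : Matrix.SpecialLinearGroup (Fin 2) ℤ,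
        eval (fun i => ((γ : Matrix (Fin 2) (Fin 2) ℤ) i.1 i.2 : ℂ)) q ≠ 0 →
        HasZeroOfOrder
          (fun z => eval (![z, j z, deriv j z, deriv (deriv j) z] : Fin 4 → ℂ) p)
          ((((γ : Matrix (Fin 2) (Fin 2) ℤ) 0 0 : ℂ) * τ + ((γ : Matrix (Fin 2) (Fin 2) ℤ) 0 1 : ℂ)) /
            (((γ : Matrix (Fin 2) (Fin 2) ℤ) 1 0 : ℂ) * τ + ((γ : Matrix (Fin 2) (Fin 2) ℤ) 1 1 : ℂ)))
          s := by
  classical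
  -- analyticity of j and its derivatives on the upper half plane
  have hS : IsOpen {z : ℂ | 0 < z.im} := by
    have h0 : {z : ℂ | 0 < z.im} = Complex.im ⁻¹' Set.Ioi 0 := rfl
    rw [h0]; exact Complex.continuous_im.isOpen_preimage _ isOpen_Ioi
  have hjan : AnalyticOnNhd ℂ j {z : ℂ | 0 < z.im} := by
    have hd : DifferentiableOn ℂ j {z : ℂ | 0 < z.im} :=
      fun z hz => (hol z hz).differentiableWithinAt
    exact hd.analyticOnNhd hS
  have hj'an : AnalyticOnNhd ℂ (deriv j) {z : ℂ | 0 < z.im} := hjan.deriv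
  have hj''an : AnalyticOnNhd ℂ (deriv (deriv j)) {z : ℂ | 0 < z.im} := hj'an.deriv
  -- the cofactor polynomial
  obtain ⟨pt, hptdef⟩ := hdvd
  have hptnd : ¬ (X 1 - C (j τ)) ∣ pt := by
    rintro ⟨u, hu⟩
    exact hnotdvd ⟨u, by rw [hptdef, hu]; ring⟩
  set r : MvPolynomial (Fin 4) ℂ :=
    aeval (fun i : Fin 4 => if i = 1 then C (j τ) else X i) pt with hrdef
  have hr0 : r ≠ 0 := by
    intro h
    apply hptnd
    have hd := aux_dvd_sub (j τ) pt
    rwa [← hrdef, h, sub_zero] at hd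
  -- evaluation of r
  have hevalr : ∀ x : Fin 4 → ℂ, x 1 = j τ → eval x r = eval x pt := by
    intro x hx1
    rw [hrdef, aux_eval_aeval]
    have hfun : (fun i => if i = 1 then j τ else x i) = x := by
      funext i
      by_cases hi : i = 1 <;> simp [hi, hx1]
    rw [hfun]
  -- a good point for r
  have hy : ∃ y : Fin 4 → ℂ, y 1 = j τ ∧ y 2 ≠ 0 ∧ eval y r ≠ 0 := by
    by_contra hcon
    push_neg at hcon
    have hzero : ∀ x : Fin 4 → ℂ, eval x (X 2 * r) = eval x 0 := by
      intro x
      rw [map_mul, eval_X, map_zero]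
      by_cases h2 : x 2 = 0
      · rw [h2, zero_mul]
      · set x' : Fin 4 → ℂ := fun i => if i = 1 then j τ else x i with hx'def
        have hx : eval x r = eval x' pt := by rw [hrdef, aux_eval_aeval]
        have hx' : eval x' r = eval x' pt := hevalr x' (by simp [hx'def])
        have hz := hcon x' (by simp [hx'def]) (by simpa [hx'def] using h2)
        rw [hx, ← hx', hz, mul_zero]
    have hXr : X (R := ℂ) (σ := Fin 4) 2 * r = 0 := MvPolynomial.funext hzero
    rcases mul_eq_zero.1 hXr with h | h
    · exact MvPolynomial.X_ne_zero 2 h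
    · exact hr0 h
  set N : ℕ := r.totalDegree with hNdef
  have hN : ∀ m ∈ r.support, m 0 ≤ N := by
    intro m hm
    refine le_trans ?_ (le_totalDegree hm)
    rw [Finsupp.sum]
    by_cases h0 : m 0 = 0
    · simp [h0]
    · exact Finset.single_le_sum (f := fun a => m a) (fun _ _ => Nat.zero_le _)
        (Finsupp.mem_support_iff.2 h0)
  refine ⟨auxQ τ (j τ) (deriv j τ) (deriv (deriv j) τ) N r, ?_, ?_⟩
  · -- existence of a complex witness
    obtain ⟨y, hy1, hy2, hyr⟩ := hy
    obtain ⟨t, ht2⟩ := IsAlgClosed.exists_pow_nat_eq (k := ℂ) (y 2 / deriv j τ) zero_lt_two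
    have ht0 : t ≠ 0 := by
      intro h
      rw [h] at ht2
      have : y 2 / deriv j τ = 0 := by rw [← ht2]; ring
      rcases div_eq_zero_iff.1 this with h' | h'
      · exact hy2 h'
      · exact hj' h'
    set cc : ℂ := (y 3 - deriv (deriv j) τ * t ^ 4) / (2 * deriv j τ * t ^ 3) with hccdef
    set dd : ℂ := t - cc * τ with hdddef
    set aa : ℂ := 1 / t + y 0 * cc with haadef
    set bb : ℂ := y 0 * t - aa * τ with hbbdef
    have h1 : aa * t = 1 + y 0 * cc * t := by
      rw [haadef]
      field_simp
    have hdet : aa * dd - bb * cc = 1 := by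
      rw [hbbdef, hdddef]
      linear_combination h1
    refine ⟨⟨!![aa, bb; cc, dd], by rw [Matrix.det_fin_two_of]; exact hdet⟩, ?_⟩
    have he00 : (!![aa, bb; cc, dd] : Matrix (Fin 2) (Fin 2) ℂ) 0 0 = aa := by simp
    have he01 : (!![aa, bb; cc, dd] : Matrix (Fin 2) (Fin 2) ℂ) 0 1 = bb := by simp
    have he10 : (!![aa, bb; cc, dd] : Matrix (Fin 2) (Fin 2) ℂ) 1 0 = cc := by simp
    have he11 : (!![aa, bb; cc, dd] : Matrix (Fin 2) (Fin 2) ℂ) 1 1 = dd := by simp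
    have hTt : τ * cc + dd = t := by rw [hdddef]; ring
    have hTne : τ * (!![aa, bb; cc, dd] : Matrix (Fin 2) (Fin 2) ℂ) (1, 0).1 (1, 0).2 +
        (!![aa, bb; cc, dd] : Matrix (Fin 2) (Fin 2) ℂ) (1, 1).1 (1, 1).2 ≠ 0 := by
      show τ * (!![aa, bb; cc, dd] : Matrix (Fin 2) (Fin 2) ℂ) 1 0 +
        (!![aa, bb; cc, dd] : Matrix (Fin 2) (Fin 2) ℂ) 1 1 ≠ 0
      rw [he10, he11, hTt]; exact ht0
    rw [aux_evalQ τ (j τ) (deriv j τ) (deriv (deriv j) τ) N r hN _ hTne]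
    simp only [he00, he01, he10, he11]
    rw [hTt]
    have hv0 : (τ * aa + bb) / t = y 0 := by
      rw [hbbdef]
      field_simp
      ring
    have hv3 : deriv (deriv j) τ * t ^ 4 + 2 * deriv j τ * cc * t ^ 3 = y 3 := by
      rw [hccdef]
      field_simp
      ring
    have hv2 : deriv j τ * t ^ 2 = y 2 := by
      rw [ht2]
      field_simp
    have hvec : ![(τ * aa + bb) / t, j τ, deriv j τ * t ^ 2,
        deriv (deriv j) τ * t ^ 4 + 2 * deriv j τ * cc * t ^ 3] = y := by
      funext i
      fin_cases i
      · simpa using hv0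
      · simpa using hy1.symm
      · simpa using hv2
      · simpa using hv3
    rw [hvec]
    exact mul_ne_zero (pow_ne_zero _ ht0) hyr
  · -- the integer matrices
    intro γ hγ
    set M : Matrix (Fin 2) (Fin 2) ℤ := (γ : Matrix (Fin 2) (Fin 2) ℤ) with hMdef
    have hdetZ : M 0 0 * M 1 1 - M 0 1 * M 1 0 = 1 := by
      have hMd := γ.prop
      rwa [Matrix.det_fin_two] at hMd
    set A : ℂ := (M 0 0 : ℂ) with hA
    set B : ℂ := (M 0 1 : ℂ) with hB
    set Cc : ℂ := (M 1 0 : ℂ) with hC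
    set D : ℂ := (M 1 1 : ℂ) with hD
    have hdetC : A * D - B * Cc = 1 := by
      rw [hA, hB, hC, hD]
      exact_mod_cast hdetZ
    have hcd : ¬ (M 1 0 = 0 ∧ M 1 1 = 0) := by
      rintro ⟨h1, h2⟩
      rw [h1, h2] at hdetZ
      simp at hdetZ
    have hTz : ∀ z : ℂ, 0 < z.im → Cc * z + D ≠ 0 := by
      intro z hz
      have := aux_t_ne (M 1 0) (M 1 1) hcd z hz
      rwa [← hC, ← hD] at this
    have hdetR : (M 0 0 : ℝ) * (M 1 1 : ℝ) - (M 0 1 : ℝ) * (M 1 0 : ℝ) = 1 := by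
      exact_mod_cast hdetZ
    have him : ∀ z : ℂ, 0 < z.im → 0 < ((A * z + B) / (Cc * z + D)).im := by
      intro z hz
      have h := aux_im (M 0 0 : ℝ) (M 0 1 : ℝ) (M 1 0 : ℝ) (M 1 1 : ℝ) hdetR z hz
        (by push_cast; rw [← hC, ← hD]; exact hTz z hz)
      rw [hA, hB, hC, hD]
      push_cast at h
      exact h
    have hE : ∀ z : ℂ, 0 < z.im → j ((A * z + B) / (Cc * z + D)) = j z := by
      intro z hz
      have h := hinv (M 0 0) (M 0 1) (M 1 0) (M 1 1) hdetZ z hz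
      rw [hA, hB, hC, hD]
      exact h
    obtain ⟨K1, K2⟩ := aux_deriv j hol A B Cc D hdetC hTz him hE τ hτ
    set w : ℂ := (A * τ + B) / (Cc * τ + D) with hwdef
    have hwS : 0 < w.im := him τ hτ
    have hjw : j w = j τ := hE τ hτ
    have hT0 : Cc * τ + D ≠ 0 := hTz τ hτ
    have hj'w : deriv j w ≠ 0 := by
      rw [K1]
      exact mul_ne_zero hj' (pow_ne_zero _ hT0)
    set G : ℂ → ℂ := fun z => eval ![z, j z, deriv j z, deriv (deriv j) z] pt with hGdef
    have hGan : AnalyticAt ℂ G w := by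
      apply aux_analyticAt_eval pt (fun z => ![z, j z, deriv j z, deriv (deriv j) z]) w
      intro i
      fin_cases i
      · exact analyticAt_id
      · simpa using hjan w hwS
      · simpa using hj'an w hwS
      · simpa using hj''an w hwS
    -- G w ≠ 0 from the polynomial condition
    have hTne : τ * ((M (1, 0).1 (1, 0).2 : ℤ) : ℂ) + ((M (1, 1).1 (1, 1).2 : ℤ) : ℂ) ≠ 0 := by
      show τ * (M 1 0 : ℂ) + (M 1 1 : ℂ) ≠ 0
      rw [← hC, ← hD]
      intro h
      exact hT0 (by rw [← h]; ring)
    have hQe := aux_evalQ τ (j τ) (deriv j τ) (deriv (deriv j) τ) N r hN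
      (fun i => (M i.1 i.2 : ℂ)) hTne
    rw [hQe] at hγ
    simp only [] at hγ
    have hrne : eval ![(τ * (M 0 0 : ℂ) + (M 0 1 : ℂ)) / (τ * (M 1 0 : ℂ) + (M 1 1 : ℂ)), j τ,
        deriv j τ * (τ * (M 1 0 : ℂ) + (M 1 1 : ℂ)) ^ 2,
        deriv (deriv j) τ * (τ * (M 1 0 : ℂ) + (M 1 1 : ℂ)) ^ 4 +
          2 * deriv j τ * (M 1 0 : ℂ) * (τ * (M 1 0 : ℂ) + (M 1 1 : ℂ)) ^ 3] r ≠ 0 :=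
      fun h => hγ (by rw [h, mul_zero])
    have hTc : τ * (M 1 0 : ℂ) + (M 1 1 : ℂ) = Cc * τ + D := by rw [← hC, ← hD]; ring
    have hvec : ![(τ * (M 0 0 : ℂ) + (M 0 1 : ℂ)) / (τ * (M 1 0 : ℂ) + (M 1 1 : ℂ)), j τ,
        deriv j τ * (τ * (M 1 0 : ℂ) + (M 1 1 : ℂ)) ^ 2,
        deriv (deriv j) τ * (τ * (M 1 0 : ℂ) + (M 1 1 : ℂ)) ^ 4 +
          2 * deriv j τ * (M 1 0 : ℂ) * (τ * (M 1 0 : ℂ) + (M 1 1 : ℂ)) ^ 3] =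
        ![w, j w, deriv j w, deriv (deriv j) w] := by
      funext i
      fin_cases i
      · show (τ * (M 0 0 : ℂ) + (M 0 1 : ℂ)) / (τ * (M 1 0 : ℂ) + (M 1 1 : ℂ)) = w
        rw [hTc, hwdef, ← hA, ← hB]
        ring_nf
      · simpa using hjw.symm
      · show deriv j τ * (τ * (M 1 0 : ℂ) + (M 1 1 : ℂ)) ^ 2 = deriv j w
        rw [hTc, K1]
      · show deriv (deriv j) τ * (τ * (M 1 0 : ℂ) + (M 1 1 : ℂ)) ^ 4 +
          2 * deriv j τ * (M 1 0 : ℂ) * (τ * (M 1 0 : ℂ) + (M 1 1 : ℂ)) ^ 3 = deriv (deriv j) w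
        rw [hTc, ← hC, K2]
        ring
    rw [hvec] at hrne
    have hGw : G w ≠ 0 := by
      have h2 := hevalr ![w, j w, deriv j w, deriv (deriv j) w] (by simpa using hjw)
      intro h0
      exact hrne (by rw [h2]; exact h0)
    -- assemble the zero of exact order s
    obtain ⟨pser, hpser⟩ := hjan w hwS
    have hds : AnalyticAt ℂ (dslope j w) w :=
      ⟨_, hpser.has_fpower_series_dslope_fslope⟩
    refine ⟨fun z => dslope j w z ^ s * G z, (hds.pow s).mul hGan, ?_, ?_⟩
    · show dslope j w w ^ s * G w ≠ 0
      rw [dslope_same]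
      exact mul_ne_zero (pow_ne_zero _ hj'w) hGw
    · apply Filter.Eventually.of_forall
      intro x
      show eval ![x, j x, deriv j x, deriv (deriv j) x] p =
        (x - w) ^ s * (dslope j w x ^ s * G x)
      have hfac : eval ![x, j x, deriv j x, deriv (deriv j) x] p =
          (j x - j τ) ^ s * G x := by
        rw [hptdef, map_mul, map_pow, map_sub, eval_X, eval_C, hGdef]
        simp
      rw [hfac]
      have hsl : j x - j τ = (x - w) * dslope j w x := by
        rw [← hjw]
        have := sub_smul_dslope j w x
        rw [smul_eq_mul] at this
        rw [← this]
      rw [hsl, mul_pow]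
      ring
end
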